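/- arXiv:2107.03445 — 2 statements merged into one kernel-verified Lean document; each statement's English description precedes it below -/
import Mathlib

section
/- Let s > 1/2. There is a constant C > 0, depending only on s, such that for all integers N > M ≥ 1: Σ_{(n₁,n₂,n₃)∈A_{N,M}} |n₁|^{2s}|n₂|^{s+1}|n₃|^{s+1} / ( |n₁|^{2s+1}|n₂|^{2s+1}|n₃|^{2s+1} ) ≤ C·M^{−(s−1/2)}. -/
open Finset Real

/-! ### Auxiliary elementary sum estimates -/

private lemma aux_toolA (r : ℝ) (hr0 : 0 < r) (hr1 : r < 1) (k : ℕ) :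
    ∑ j ∈ Finset.Icc 1 k, (j:ℝ)^(-r) ≤ (1/(1-r)) * (k:ℝ)^(1-r) := by
  set p : ℝ := 1 - r with hpdef
  have hp0 : 0 < p := by simp only [hpdef]; linarith
  have hp1 : p ≤ 1 := by simp only [hpdef]; linarith
  have key : ∀ i : ℕ, ((i+1 : ℕ):ℝ)^(-r) ≤ (((i+1:ℕ):ℝ)^p - ((i:ℕ):ℝ)^p)/p := by
    intro i
    have hj : (0:ℝ) < ((i:ℝ)+1) := by positivity
    rw [le_div_iff₀ hp0]
    push_cast
    have hxnn : (0:ℝ) ≤ 1 + (-1/((i:ℝ)+1)) := by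
      rw [neg_div, ← sub_eq_add_neg, sub_nonneg, div_le_one hj]; linarith
    have h1 : (1 + (-1/((i:ℝ)+1)))^p ≤ 1 + p * (-1/((i:ℝ)+1)) := by
      apply rpow_one_add_le_one_add_mul_self _ hp0.le hp1
      rw [neg_div, neg_le_neg_iff, div_le_one hj]; linarith
    have h3 : ((i:ℝ))^p = ((i:ℝ)+1)^p * (1 + (-1/((i:ℝ)+1)))^p := by
      rw [← Real.mul_rpow hj.le hxnn]
      congr 1
      field_simp
      ring
    have h5 : ((i:ℝ)+1)^(-r) = ((i:ℝ)+1)^p / ((i:ℝ)+1) := by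
      rw [show -r = p - 1 by rw [hpdef]; ring, Real.rpow_sub hj, Real.rpow_one]
    have hber : ((i:ℝ))^p ≤ ((i:ℝ)+1)^p - p * ((i:ℝ)+1)^(-r) := by
      calc ((i:ℝ))^p = ((i:ℝ)+1)^p * (1 + (-1/((i:ℝ)+1)))^p := h3
        _ ≤ ((i:ℝ)+1)^p * (1 + p * (-1/((i:ℝ)+1))) :=
            mul_le_mul_of_nonneg_left h1 (by positivity)
        _ = ((i:ℝ)+1)^p - p * ((i:ℝ)+1)^(-r) := by rw [h5]; field_simp; ring
    linarith
  calc ∑ j ∈ Finset.Icc 1 k, (j:ℝ)^(-r)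
      = ∑ i ∈ Finset.range k, ((1+i:ℕ):ℝ)^(-r) := by
        rw [← Finset.Ico_add_one_right_eq_Icc, Finset.sum_Ico_eq_sum_range]
        simp
    _ ≤ ∑ i ∈ Finset.range k, ((((i+1:ℕ)):ℝ)^p - ((i:ℕ):ℝ)^p)/p :=
        Finset.sum_le_sum (fun i _ => by rw [show 1+i = i+1 from by omega]; exact key i)
    _ = (1/p) * ∑ i ∈ Finset.range k, ((((i+1:ℕ)):ℝ)^p - ((i:ℕ):ℝ)^p) := by
        rw [mul_sum]; exact Finset.sum_congr rfl (fun i _ => by ring)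
    _ = (1/p) * ((k:ℝ)^p - ((0:ℕ):ℝ)^p) := by
        rw [Finset.sum_range_sub (fun i => ((i:ℕ):ℝ)^p)]
    _ ≤ (1/(1-r)) * (k:ℝ)^(1-r) := by
        simp only [Nat.cast_zero, Real.zero_rpow hp0.ne', hpdef]
        ring_nf
        simp [Real.zero_rpow (show (1:ℝ)-r ≠ 0 by linarith)]

private lemma aux_toolB (q : ℝ) (hq : 1 < q) (M N : ℕ) (hM : 1 ≤ M) :
    ∑ k ∈ Finset.Ioc M N, (k:ℝ)^(-q) ≤ (1/(q-1)) * (M:ℝ)^(1-q) := by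
  set u : ℝ := q - 1 with hudef
  have hu0 : 0 < u := by simp only [hudef]; linarith
  have key : ∀ i : ℕ, 1 ≤ i → ((i+1 : ℕ):ℝ)^(-q) ≤ (((i:ℕ):ℝ)^(-u) - ((i+1:ℕ):ℝ)^(-u))/u := by
    intro i hi
    have hx : (1:ℝ) ≤ (i:ℝ) := by exact_mod_cast hi
    have hx0 : (0:ℝ) < (i:ℝ) := by linarith
    have hy0 : (0:ℝ) < (i:ℝ)+1 := by linarith
    have hxu : (0:ℝ) < ((i:ℝ))^u := Real.rpow_pos_of_pos hx0 u
    have hyu : (0:ℝ) < ((i:ℝ)+1)^u := Real.rpow_pos_of_pos hy0 u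
    have hquot : (0:ℝ) ≤ u/((i:ℝ)+1) := div_nonneg hu0.le hy0.le
    rw [le_div_iff₀ hu0]
    push_cast
    have hyq : ((i:ℝ)+1)^(-q) = ((i:ℝ)+1)^(-u) / ((i:ℝ)+1) := by
      rw [show -q = -u - 1 by rw [hudef]; ring, Real.rpow_sub hy0, Real.rpow_one]
    have hmul : ((i:ℝ))^u * (1 + u/((i:ℝ)+1)) ≤ ((i:ℝ)+1)^u := by
      rcases le_or_gt u 1 with hu1 | hu1
      · have hxnn : (0:ℝ) ≤ 1 + (-1/((i:ℝ)+1)) := by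
          rw [neg_div, ← sub_eq_add_neg, sub_nonneg, div_le_one hy0]; linarith
        have h9 : 1/((i:ℝ)+1) ≤ 1 := by rw [div_le_one hy0]; linarith
        have h1 : (1 + (-1/((i:ℝ)+1)))^u ≤ 1 + u * (-1/((i:ℝ)+1)) := by
          apply rpow_one_add_le_one_add_mul_self _ hu0.le hu1
          rw [neg_div]; linarith
        have h2 : ((i:ℝ))^u = ((i:ℝ)+1)^u * (1 + (-1/((i:ℝ)+1)))^u := by
          rw [← Real.mul_rpow hy0.le hxnn]; congr 1; field_simp; ring
        have h3 : ((i:ℝ))^u ≤ ((i:ℝ)+1)^u * (1 - u/((i:ℝ)+1)) := by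
          rw [h2]
          refine mul_le_mul_of_nonneg_left ?_ hyu.le
          calc (1 + (-1/((i:ℝ)+1)))^u ≤ 1 + u * (-1/((i:ℝ)+1)) := h1
            _ = 1 - u/((i:ℝ)+1) := by ring
        nlinarith [h3, sq_nonneg (u/((i:ℝ)+1)), hyu, hquot]
      · have h1 : 1 + u * (1/(i:ℝ)) ≤ (1 + 1/(i:ℝ))^u := by
          apply one_add_mul_self_le_rpow_one_add _ hu1.le
          have h0 : (0:ℝ) ≤ 1/(i:ℝ) := by positivity
          linarith
        have h2 : ((i:ℝ)+1)^u = ((i:ℝ))^u * (1 + 1/(i:ℝ))^u := by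
          rw [← Real.mul_rpow hx0.le (by positivity)]; congr 1; field_simp
        rw [h2]
        refine mul_le_mul_of_nonneg_left ?_ hxu.le
        calc 1 + u/((i:ℝ)+1) ≤ 1 + u * (1/(i:ℝ)) := by
              have : u/((i:ℝ)+1) ≤ u/(i:ℝ) := by
                apply div_le_div_of_nonneg_left hu0.le hx0; linarith
              rw [mul_one_div]; linarith
          _ ≤ (1 + 1/(i:ℝ))^u := h1
    have main : ((i:ℝ)+1)^(-u) * (1 + u/((i:ℝ)+1)) ≤ ((i:ℝ))^(-u) := by
      rw [Real.rpow_neg hx0.le, Real.rpow_neg hy0.le]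
      calc (((i:ℝ)+1)^u)⁻¹ * (1+u/((i:ℝ)+1)) = (1+u/((i:ℝ)+1))/((i:ℝ)+1)^u := by ring
        _ ≤ 1/((i:ℝ))^u := by
            rw [div_le_div_iff₀ hyu hxu]; nlinarith [hmul]
        _ = (((i:ℝ))^u)⁻¹ := by ring
    rw [hyq]
    have expand : ((i:ℝ)+1)^(-u) * (1 + u/((i:ℝ)+1)) =
        ((i:ℝ)+1)^(-u) + ((i:ℝ)+1)^(-u)/((i:ℝ)+1) * u := by field_simp
    linarith [main, expand.symm.le]
  calc ∑ k ∈ Finset.Ioc M N, (k:ℝ)^(-q)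
      = ∑ i ∈ Finset.range (N + 1 - (M+1)), ((M+1+i : ℕ):ℝ)^(-q) := by
        rw [← Finset.Ico_add_one_add_one_eq_Ioc, Finset.sum_Ico_eq_sum_range]
    _ ≤ ∑ i ∈ Finset.range (N + 1 - (M+1)),
          (((M+i:ℕ):ℝ)^(-u) - ((M+i+1:ℕ):ℝ)^(-u))/u := by
        refine Finset.sum_le_sum (fun i _ => ?_)
        have := key (M+i) (by omega)
        rw [show M+1+i = M+i+1 by omega]; exact this
    _ = (1/u) * ∑ i ∈ Finset.range (N + 1 - (M+1)),
          (((M+i:ℕ):ℝ)^(-u) - ((M+(i+1):ℕ):ℝ)^(-u)) := by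
        rw [mul_sum]
        refine Finset.sum_congr rfl (fun i _ => ?_)
        rw [show M+(i+1) = M+i+1 from by omega]; ring
    _ = (1/u) * (((M+0:ℕ):ℝ)^(-u) - ((M + (N+1-(M+1)):ℕ):ℝ)^(-u)) := by
        rw [Finset.sum_range_sub' (fun i => ((M+i:ℕ):ℝ)^(-u))]
    _ ≤ (1/u) * (M:ℝ)^(1-q) := by
        have h1 : (0:ℝ) ≤ ((M + (N+1-(M+1)):ℕ):ℝ)^(-u) := by positivity
        have h2 : ((M+0:ℕ):ℝ)^(-u) = (M:ℝ)^(1-q) := by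
          rw [show M+0 = M from rfl, show (1:ℝ)-q = -u from by rw [hudef]; ring]
        rw [h2]
        have h3 : (0:ℝ) ≤ 1/u := div_nonneg zero_le_one hu0.le
        nlinarith [h1, h3]
    _ = (1/(q-1)) * (M:ℝ)^(1-q) := by rw [hudef]

private lemma aux_core (M N : ℕ) (hM : 1 ≤ M) (e1 e2 r : ℝ) (hr0 : 0 < r) (hr1 : r < 1)
    (hre : r ≤ e2) (hq : 1 < e1 - (1 - r)) :
    ∑ q ∈ (Finset.Ioc M N ×ˢ Finset.Icc 1 N).filter (fun q => q.2 ≤ q.1),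
      ((q.1:ℝ)^(-e1) * (q.2:ℝ)^(-e2))
      ≤ (1/(1-r)) * (1/(e1 - (1-r) - 1)) * (M:ℝ)^(2 - r - e1) := by
  rw [Finset.sum_filter, Finset.sum_product]
  have step1 : ∀ k ∈ Finset.Ioc M N,
      (∑ j ∈ Finset.Icc 1 N, if j ≤ k then (k:ℝ)^(-e1) * (j:ℝ)^(-e2) else 0)
        ≤ (k:ℝ)^(-e1) * ((1/(1-r)) * (k:ℝ)^(1-r)) := by
    intro k hk
    have hk1 : 1 ≤ k := le_trans hM (Finset.mem_Ioc.mp hk).1.le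
    have e1' : (∑ j ∈ Finset.Icc 1 N, if j ≤ k then (k:ℝ)^(-e1) * (j:ℝ)^(-e2) else 0)
        = (k:ℝ)^(-e1) * ∑ j ∈ (Finset.Icc 1 N).filter (fun j => j ≤ k), (j:ℝ)^(-e2) := by
      rw [← Finset.sum_filter, Finset.mul_sum]
    rw [e1']
    refine mul_le_mul_of_nonneg_left ?_ (by positivity)
    calc ∑ j ∈ (Finset.Icc 1 N).filter (fun j => j ≤ k), (j:ℝ)^(-e2)
        ≤ ∑ j ∈ Finset.Icc 1 k, (j:ℝ)^(-e2) := by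
          apply Finset.sum_le_sum_of_subset_of_nonneg
          · intro j hj
            simp only [Finset.mem_filter, Finset.mem_Icc] at *
            omega
          · intro j _ _; positivity
      _ ≤ ∑ j ∈ Finset.Icc 1 k, (j:ℝ)^(-r) := by
          refine Finset.sum_le_sum (fun j hj => ?_)
          have hj1 : (1:ℝ) ≤ (j:ℝ) := by
            have := (Finset.mem_Icc.mp hj).1; exact_mod_cast this
          exact Real.rpow_le_rpow_of_exponent_le hj1 (by linarith)
      _ ≤ (1/(1-r)) * (k:ℝ)^(1-r) := aux_toolA r hr0 hr1 k
  calc ∑ k ∈ Finset.Ioc M N, (∑ j ∈ Finset.Icc 1 N, if j ≤ k then (k:ℝ)^(-e1) * (j:ℝ)^(-e2) else 0)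
      ≤ ∑ k ∈ Finset.Ioc M N, (k:ℝ)^(-e1) * ((1/(1-r)) * (k:ℝ)^(1-r)) :=
        Finset.sum_le_sum step1
    _ = (1/(1-r)) * ∑ k ∈ Finset.Ioc M N, (k:ℝ)^(-(e1 - (1-r))) := by
        rw [Finset.mul_sum]
        refine Finset.sum_congr rfl (fun k hk => ?_)
        have hk0 : (0:ℝ) < (k:ℝ) := by
          have := (Finset.mem_Ioc.mp hk).1
          have : 1 ≤ k := by omega
          exact_mod_cast Nat.lt_of_lt_of_le Nat.zero_lt_one this
        rw [show -(e1 - (1-r)) = -e1 + (1-r) by ring, Real.rpow_add hk0]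
        ring
    _ ≤ (1/(1-r)) * ((1/(e1 - (1-r) - 1)) * (M:ℝ)^(1 - (e1 - (1-r)))) := by
        refine mul_le_mul_of_nonneg_left (aux_toolB _ hq M N hM) ?_
        have : 0 < 1 - r := by linarith
        positivity
    _ = (1/(1-r)) * (1/(e1 - (1-r) - 1)) * (M:ℝ)^(2 - r - e1) := by
        rw [show 1 - (e1 - (1-r)) = 2 - r - e1 by ring]; ring

private lemma aux_transfer (S : Finset (ℤ×ℤ×ℤ)) (u v : ℤ×ℤ×ℤ → ℤ)
    (hinj : ∀ p ∈ S, ∀ q ∈ S, u p = u q → v p = v q → p = q)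
    (E : Finset (ℕ×ℕ)) (hE : ∀ p ∈ S, ((u p).natAbs, (v p).natAbs) ∈ E)
    (f : ℕ×ℕ → ℝ) (hf : ∀ q, 0 ≤ f q) :
    ∑ p ∈ S, f ((u p).natAbs, (v p).natAbs) ≤ 4 * ∑ q ∈ E, f q := by
  classical
  have hcomp : ∑ p ∈ S, f ((u p).natAbs, (v p).natAbs)
      = ∑ b ∈ S.image (fun p => ((u p).natAbs, (v p).natAbs)),
          (S.filter (fun a => ((u a).natAbs, (v a).natAbs) = b)).card • f b :=
    Finset.sum_comp f (fun p => ((u p).natAbs, (v p).natAbs))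
  rw [hcomp]
  have hcard : ∀ b : ℕ×ℕ, (S.filter (fun a => ((u a).natAbs, (v a).natAbs) = b)).card ≤ 4 := by
    intro b
    have hsub : ∀ a ∈ S.filter (fun a => ((u a).natAbs, (v a).natAbs) = b),
        (u a, v a) ∈ ({((b.1:ℤ), (b.2:ℤ)), ((b.1:ℤ), -(b.2:ℤ)), (-(b.1:ℤ), (b.2:ℤ)),
          (-(b.1:ℤ), -(b.2:ℤ))} : Finset (ℤ×ℤ)) := by
      intro a ha
      rw [Finset.mem_filter] at ha
      obtain ⟨-, hb⟩ := ha
      have h1 : (u a).natAbs = b.1 := by rw [Prod.ext_iff] at hb; exact hb.1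
      have h2 : (v a).natAbs = b.2 := by rw [Prod.ext_iff] at hb; exact hb.2
      have hu' : u a = (b.1:ℤ) ∨ u a = -(b.1:ℤ) := by omega
      have hv' : v a = (b.2:ℤ) ∨ v a = -(b.2:ℤ) := by omega
      simp only [Finset.mem_insert, Finset.mem_singleton, Prod.ext_iff]
      tauto
    have hinj' : Set.InjOn (fun a => (u a, v a))
        (S.filter (fun a => ((u a).natAbs, (v a).natAbs) = b)) := by
      intro x hx y hy hxy
      simp only [Finset.coe_filter, Set.mem_setOf_eq] at hx hy
      rw [Prod.ext_iff] at hxy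
      exact hinj x hx.1 y hy.1 hxy.1 hxy.2
    calc (S.filter (fun a => ((u a).natAbs, (v a).natAbs) = b)).card
        ≤ ({((b.1:ℤ), (b.2:ℤ)), ((b.1:ℤ), -(b.2:ℤ)), (-(b.1:ℤ), (b.2:ℤ)),
          (-(b.1:ℤ), -(b.2:ℤ))} : Finset (ℤ×ℤ)).card :=
          Finset.card_le_card_of_injOn _ hsub hinj'
      _ ≤ 4 := by
          apply le_trans (Finset.card_insert_le _ _)
          have := Finset.card_insert_le ((b.1:ℤ), -(b.2:ℤ))
            ({(-(b.1:ℤ), (b.2:ℤ)), (-(b.1:ℤ), -(b.2:ℤ))} : Finset (ℤ×ℤ))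
          have h2 := Finset.card_insert_le (-(b.1:ℤ), (b.2:ℤ))
            ({(-(b.1:ℤ), -(b.2:ℤ))} : Finset (ℤ×ℤ))
          simp only [Finset.card_singleton] at *
          omega
  calc ∑ b ∈ S.image (fun p => ((u p).natAbs, (v p).natAbs)),
          (S.filter (fun a => ((u a).natAbs, (v a).natAbs) = b)).card • f b
      ≤ ∑ b ∈ S.image (fun p => ((u p).natAbs, (v p).natAbs)), 4 * f b := by
        refine Finset.sum_le_sum (fun b hb => ?_)
        rw [nsmul_eq_mul]
        exact mul_le_mul_of_nonneg_right (by exact_mod_cast hcard b) (hf b)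
    _ = 4 * ∑ b ∈ S.image (fun p => ((u p).natAbs, (v p).natAbs)), f b := by
        rw [Finset.mul_sum]
    _ ≤ 4 * ∑ q ∈ E, f q := by
        refine mul_le_mul_of_nonneg_left ?_ (by norm_num)
        apply Finset.sum_le_sum_of_subset_of_nonneg
        · intro b hb
          obtain ⟨p, hp, rfl⟩ := Finset.mem_image.mp hb
          exact hE p hp
        · intro b _ _; exact hf b

private lemma aux_region_le (s : ℝ) (N M : ℕ) (hM : 1 ≤ M)
    (e1 e2 r K : ℝ) (hK : 0 ≤ K) (hr0 : 0 < r) (hr1 : r < 1) (hre : r ≤ e2)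
    (hq : 1 < e1 - (1-r)) (hexp : 2 - r - e1 ≤ 1/2 - s)
    (S : Finset (ℤ×ℤ×ℤ)) (F : ℤ×ℤ×ℤ → ℝ)
    (u v : ℤ×ℤ×ℤ → ℤ)
    (hinj : ∀ p ∈ S, ∀ q ∈ S, u p = u q → v p = v q → p = q)
    (hmem : ∀ p ∈ S, M < (u p).natAbs ∧ (u p).natAbs ≤ N ∧ 1 ≤ (v p).natAbs ∧
      (v p).natAbs ≤ N ∧ (v p).natAbs ≤ (u p).natAbs)
    (hpt : ∀ p ∈ S, F p ≤ K * (((u p).natAbs:ℝ)^(-e1) * ((v p).natAbs:ℝ)^(-e2))) :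
    ∑ p ∈ S, F p ≤ K * 4 * ((1/(1-r)) * (1/(e1-(1-r)-1))) * (M:ℝ)^(1/2-s) := by
  classical
  set f : ℕ×ℕ → ℝ := fun q => (q.1:ℝ)^(-e1) * (q.2:ℝ)^(-e2) with hfdef
  have hf : ∀ q, 0 ≤ f q := fun q => by simp only [hfdef]; positivity
  set E := (Finset.Ioc M N ×ˢ Finset.Icc 1 N).filter (fun q => q.2 ≤ q.1) with hEdef
  have hE : ∀ p ∈ S, ((u p).natAbs, (v p).natAbs) ∈ E := by
    intro p hp
    obtain ⟨h1, h2, h3, h4, h5⟩ := hmem p hp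
    simp only [hEdef, Finset.mem_filter, Finset.mem_product, Finset.mem_Ioc, Finset.mem_Icc]
    exact ⟨⟨⟨h1, h2⟩, h3, h4⟩, h5⟩
  have hM1 : (1:ℝ) ≤ (M:ℝ) := by exact_mod_cast hM
  have hCcore : 0 ≤ (1/(1-r)) * (1/(e1-(1-r)-1)) := by
    have h1 : 0 < 1 - r := by linarith
    have h2 : 0 < e1 - (1-r) - 1 := by linarith
    positivity
  calc ∑ p ∈ S, F p
      ≤ ∑ p ∈ S, K * f ((u p).natAbs, (v p).natAbs) := Finset.sum_le_sum hpt
    _ = K * ∑ p ∈ S, f ((u p).natAbs, (v p).natAbs) := by rw [Finset.mul_sum]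
    _ ≤ K * (4 * ∑ q ∈ E, f q) :=
        mul_le_mul_of_nonneg_left (aux_transfer S u v hinj E hE f hf) hK
    _ ≤ K * (4 * ((1/(1-r)) * (1/(e1-(1-r)-1)) * (M:ℝ)^(2 - r - e1))) := by
        refine mul_le_mul_of_nonneg_left ?_ hK
        refine mul_le_mul_of_nonneg_left ?_ (by norm_num)
        exact aux_core M N hM e1 e2 r hr0 hr1 hre hq
    _ ≤ K * 4 * ((1/(1-r)) * (1/(e1-(1-r)-1))) * (M:ℝ)^(1/2-s) := by
        have hmono : (M:ℝ)^(2-r-e1) ≤ (M:ℝ)^(1/2-s) :=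
          Real.rpow_le_rpow_of_exponent_le hM1 hexp
        calc K * (4 * ((1/(1-r)) * (1/(e1-(1-r)-1)) * (M:ℝ)^(2 - r - e1)))
            = (K * 4 * ((1/(1-r)) * (1/(e1-(1-r)-1)))) * (M:ℝ)^(2 - r - e1) := by ring
          _ ≤ (K * 4 * ((1/(1-r)) * (1/(e1-(1-r)-1)))) * (M:ℝ)^(1/2-s) := by
              refine mul_le_mul_of_nonneg_left hmono ?_
              positivity

private lemma aux_sum_split' {α : Type*} (s : Finset α) (f : α → ℝ)
    (hf : ∀ p ∈ s, 0 ≤ f p) (P Q : α → Prop) [DecidablePred P] [DecidablePred Q]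
    (h : ∀ p ∈ s, P p ∨ Q p) :
    ∑ p ∈ s, f p ≤ ∑ p ∈ s.filter P, f p + ∑ p ∈ s.filter Q, f p := by
  classical
  rw [← Finset.sum_filter_add_sum_filter_not s P f]
  refine add_le_add_right ?_ _
  apply Finset.sum_le_sum_of_subset_of_nonneg
  · intro p hp
    rw [Finset.mem_filter] at *
    exact ⟨hp.1, (h p hp.1).resolve_left hp.2⟩
  · intro p hp _
    exact hf p (Finset.mem_filter.mp hp).1

private lemma aux_sum_split6 {α : Type*} (s : Finset α) (f : α → ℝ)
    (hf : ∀ p ∈ s, 0 ≤ f p)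
    (P1 P2 P3 P4 P5 P6 : α → Prop) [DecidablePred P1] [DecidablePred P2] [DecidablePred P3]
    [DecidablePred P4] [DecidablePred P5] [DecidablePred P6]
    (h : ∀ p ∈ s, P1 p ∨ P2 p ∨ P3 p ∨ P4 p ∨ P5 p ∨ P6 p) :
    ∑ p ∈ s, f p ≤ ∑ p ∈ s.filter P1, f p + (∑ p ∈ s.filter P2, f p +
      (∑ p ∈ s.filter P3, f p + (∑ p ∈ s.filter P4, f p +
      (∑ p ∈ s.filter P5, f p + ∑ p ∈ s.filter P6, f p)))) := by
  classical
  have step : ∀ (R A B : α → Prop) (_ : DecidablePred R) (_ : DecidablePred A)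
      (_ : DecidablePred B), (∀ p ∈ s, R p → A p ∨ B p) →
      ∑ p ∈ s.filter R, f p ≤ ∑ p ∈ s.filter A, f p + ∑ p ∈ s.filter B, f p := by
    intro R A B _ _ _ hRAB
    calc ∑ p ∈ s.filter R, f p
        ≤ ∑ p ∈ (s.filter R).filter A, f p + ∑ p ∈ (s.filter R).filter (fun x => B x), f p := by
          apply aux_sum_split' _ _ (fun p hp => hf p (Finset.mem_filter.mp hp).1)
          intro p hp
          rw [Finset.mem_filter] at hp
          exact hRAB p hp.1 hp.2
      _ ≤ ∑ p ∈ s.filter A, f p + ∑ p ∈ s.filter (fun x => B x), f p := by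
          refine add_le_add ?_ ?_ <;>
          · apply Finset.sum_le_sum_of_subset_of_nonneg
            · intro p hp
              rw [Finset.filter_filter] at hp
              rw [Finset.mem_filter] at *
              exact ⟨hp.1, hp.2.2⟩
            · intro p hp _
              exact hf p (Finset.mem_filter.mp hp).1
  calc ∑ p ∈ s, f p
      ≤ ∑ p ∈ s.filter P1, f p +
          ∑ p ∈ s.filter (fun x => P2 x ∨ P3 x ∨ P4 x ∨ P5 x ∨ P6 x), f p :=
        aux_sum_split' s f hf _ _ h
    _ ≤ ∑ p ∈ s.filter P1, f p + (∑ p ∈ s.filter P2, f p +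
          (∑ p ∈ s.filter P3, f p + (∑ p ∈ s.filter P4, f p +
          (∑ p ∈ s.filter P5, f p + ∑ p ∈ s.filter P6, f p)))) := by
        refine add_le_add_right ?_ _
        calc ∑ p ∈ s.filter (fun x => P2 x ∨ P3 x ∨ P4 x ∨ P5 x ∨ P6 x), f p
            ≤ ∑ p ∈ s.filter P2, f p +
              ∑ p ∈ s.filter (fun x => P3 x ∨ P4 x ∨ P5 x ∨ P6 x), f p :=
              step _ _ _ _ _ _ (fun p _ hp => hp)
          _ ≤ ∑ p ∈ s.filter P2, f p + (∑ p ∈ s.filter P3, f p +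
              (∑ p ∈ s.filter P4, f p + (∑ p ∈ s.filter P5, f p + ∑ p ∈ s.filter P6, f p))) := by
              refine add_le_add_right ?_ _
              calc ∑ p ∈ s.filter (fun x => P3 x ∨ P4 x ∨ P5 x ∨ P6 x), f p
                  ≤ ∑ p ∈ s.filter P3, f p +
                    ∑ p ∈ s.filter (fun x => P4 x ∨ P5 x ∨ P6 x), f p :=
                    step _ _ _ _ _ _ (fun p _ hp => hp)
                _ ≤ ∑ p ∈ s.filter P3, f p + (∑ p ∈ s.filter P4, f p +
                    (∑ p ∈ s.filter P5, f p + ∑ p ∈ s.filter P6, f p)) := by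
                    refine add_le_add_right ?_ _
                    calc ∑ p ∈ s.filter (fun x => P4 x ∨ P5 x ∨ P6 x), f p
                        ≤ ∑ p ∈ s.filter P4, f p +
                          ∑ p ∈ s.filter (fun x => P5 x ∨ P6 x), f p :=
                          step _ _ _ _ _ _ (fun p _ hp => hp)
                      _ ≤ ∑ p ∈ s.filter P4, f p +
                          (∑ p ∈ s.filter P5, f p + ∑ p ∈ s.filter P6, f p) := by
                          refine add_le_add_right ?_ _
                          exact step _ _ _ _ _ _ (fun p _ hp => hp)

private lemma aux_ptA (s a c : ℝ) (hs : 0 < s) (ha : 0 < a) (hc : 0 < c) (h2 : a ≤ 2*c) :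
    c^(-s) ≤ 2^s * a^(-s) := by
  have h1 : a/2 ≤ c := by linarith
  have h2' : (0:ℝ) < a/2 := by linarith
  have h3 : c^(-s) ≤ (a/2)^(-s) := Real.rpow_le_rpow_of_nonpos h2' h1 (by linarith)
  have h4 : (a/2)^(-s) = 2^s * a^(-s) := by
    rw [Real.rpow_neg h2'.le, Real.rpow_neg ha.le,
      Real.div_rpow ha.le (by norm_num : (0:ℝ) ≤ 2), inv_div, div_eq_mul_inv]
  rw [← h4]; exact h3

private lemma aux_rpow_split (a x y : ℝ) (ha : 0 < a) : a^(-(x+y)) = a^(-x) * a^(-y) := by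
  rw [← Real.rpow_add ha]; ring_nf

private lemma aux_pt_main1 (s A B C K : ℝ) (hs : 0 < s) (hA : 1 ≤ A) (hB : 1 ≤ B) (hC : 1 ≤ C)
    (h2 : A ≤ 2*C) (hK : 2^s ≤ K) :
    A^(-(1:ℝ)) * B^(-s) * C^(-s) ≤ K * (A^(-(1+s)) * B^(-s)) := by
  have hA0 : (0:ℝ) < A := by linarith
  have hB0 : (0:ℝ) < B := by linarith
  have hC0 : (0:ℝ) < C := by linarith
  have h3 : C^(-s) ≤ 2^s * A^(-s) := aux_ptA s A C hs hA0 hC0 h2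
  calc A^(-(1:ℝ)) * B^(-s) * C^(-s) ≤ A^(-(1:ℝ)) * B^(-s) * (2^s * A^(-s)) := by
        refine mul_le_mul_of_nonneg_left h3 ?_
        positivity
    _ = 2^s * (A^(-(1+s)) * B^(-s)) := by
        rw [aux_rpow_split A 1 s hA0]; ring
    _ ≤ K * (A^(-(1+s)) * B^(-s)) := by
        refine mul_le_mul_of_nonneg_right hK ?_
        positivity

private lemma aux_pt_main2 (s A B C K : ℝ) (hs : 0 < s) (hA : 1 ≤ A) (hB : 1 ≤ B) (hC : 1 ≤ C)
    (h2 : B ≤ 2*A) (hK : 2 ≤ K) :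
    A^(-(1:ℝ)) * B^(-s) * C^(-s) ≤ K * (B^(-(1+s)) * C^(-s)) := by
  have hA0 : (0:ℝ) < A := by linarith
  have hB0 : (0:ℝ) < B := by linarith
  have hC0 : (0:ℝ) < C := by linarith
  have h3 : A^(-(1:ℝ)) ≤ 2 * B^(-(1:ℝ)) := by
    have := aux_ptA 1 B A one_pos hB0 hA0 h2
    rwa [Real.rpow_one] at this
  calc A^(-(1:ℝ)) * B^(-s) * C^(-s) ≤ (2 * B^(-(1:ℝ))) * B^(-s) * C^(-s) := by
        refine mul_le_mul_of_nonneg_right (mul_le_mul_of_nonneg_right h3 ?_) ?_ <;> positivity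
    _ = 2 * (B^(-(1+s)) * C^(-s)) := by
        rw [aux_rpow_split B 1 s hB0]; ring
    _ ≤ K * (B^(-(1+s)) * C^(-s)) := by
        refine mul_le_mul_of_nonneg_right hK ?_
        positivity

private lemma aux_pt_main3 (s A B C K : ℝ) (hs : 0 < s) (hA : 1 ≤ A) (hB : 1 ≤ B) (hC : 1 ≤ C)
    (h2 : B ≤ 2*C) (hK : 2^s ≤ K) :
    A^(-(1:ℝ)) * B^(-s) * C^(-s) ≤ K * (B^(-(2*s)) * A^(-(1:ℝ))) := by
  have hA0 : (0:ℝ) < A := by linarith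
  have hB0 : (0:ℝ) < B := by linarith
  have hC0 : (0:ℝ) < C := by linarith
  have h3 : C^(-s) ≤ 2^s * B^(-s) := aux_ptA s B C hs hB0 hC0 h2
  calc A^(-(1:ℝ)) * B^(-s) * C^(-s) ≤ A^(-(1:ℝ)) * B^(-s) * (2^s * B^(-s)) := by
        refine mul_le_mul_of_nonneg_left h3 ?_
        positivity
    _ = 2^s * (B^(-(2*s)) * A^(-(1:ℝ))) := by
        rw [show -(2*s) = -(s+s) by ring, aux_rpow_split B s s hB0]; ring
    _ ≤ K * (B^(-(2*s)) * A^(-(1:ℝ))) := by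
        refine mul_le_mul_of_nonneg_right hK ?_
        positivity

private lemma aux_simp_term (s a b c : ℝ) (ha : 0 < a) (hb : 0 < b) (hc : 0 < c) :
    a ^ (2*s) * b^(s+1) * c^(s+1) / (a^(2*s+1) * b^(2*s+1) * c^(2*s+1)) =
      a ^ (-(1:ℝ)) * b^(-s) * c^(-s) := by
  rw [div_eq_iff (by positivity)]
  have h1 : a^(-(1:ℝ)) * a^(2*s+1) = a^(2*s) := by
    rw [← Real.rpow_add ha]; ring_nf
  have h2 : b^(-s) * b^(2*s+1) = b^(s+1) := by
    rw [← Real.rpow_add hb]; ring_nf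
  have h3 : c^(-s) * c^(2*s+1) = c^(s+1) := by
    rw [← Real.rpow_add hc]; ring_nf
  calc a ^ (2*s) * b^(s+1) * c^(s+1)
      = (a^(-(1:ℝ)) * a^(2*s+1)) * ((b^(-s) * b^(2*s+1)) * (c^(-s) * c^(2*s+1))) := by
        rw [h1, h2, h3]; ring
    _ = a ^ (-(1:ℝ)) * b^(-s) * c^(-s) * (a^(2*s+1) * b^(2*s+1) * c^(2*s+1)) := by ring

private lemma aux_natAbs_cast_real (n : ℤ) : ((n.natAbs : ℕ) : ℝ) = |(n:ℝ)| := by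
  rw [Nat.cast_natAbs, Int.cast_abs]

/-- The index set `A_{N,M}` of triples of nonzero integers summing to zero with
`M < max |n_i| ≤ N`. -/
noncomputable def ANM (N M : ℕ) : Finset (ℤ × ℤ × ℤ) :=
  ((Finset.Icc (-(N : ℤ)) N ×ˢ Finset.Icc (-(N : ℤ)) N ×ˢ Finset.Icc (-(N : ℤ)) N).filter
    fun p => p.1 ≠ 0 ∧ p.2.1 ≠ 0 ∧ p.2.2 ≠ 0 ∧ p.1 + p.2.1 + p.2.2 = 0 ∧
      (M : ℤ) < max |p.1| (max |p.2.1| |p.2.2|))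

private lemma aux_ANM_facts {N M : ℕ} {p : ℤ×ℤ×ℤ} (hp : p ∈ ANM N M) :
    p.1 ≠ 0 ∧ p.2.1 ≠ 0 ∧ p.2.2 ≠ 0 ∧ p.1 + p.2.1 + p.2.2 = 0 ∧
    (M < p.1.natAbs ∨ M < p.2.1.natAbs ∨ M < p.2.2.natAbs) ∧
    p.1.natAbs ≤ N ∧ p.2.1.natAbs ≤ N ∧ p.2.2.natAbs ≤ N := by
  unfold ANM at hp
  rw [Finset.mem_filter, Finset.mem_product, Finset.mem_product] at hp
  obtain ⟨⟨hbox1, hbox2, hbox3⟩, h1, h2, h3, h4, h5⟩ := hp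
  rw [Finset.mem_Icc] at hbox1 hbox2 hbox3
  rw [lt_max_iff, lt_max_iff, Int.abs_eq_natAbs, Int.abs_eq_natAbs, Int.abs_eq_natAbs] at h5
  refine ⟨h1, h2, h3, h4, ?_, ?_, ?_, ?_⟩ <;> omega

set_option maxHeartbeats 2000000 in
/-- Estimate on the Wick sum with weight `|n₁|^{2s}|n₂|^{s+1}|n₃|^{s+1}`. -/
theorem statement10 (s : ℝ) (hs : 1 / 2 < s) :
    ∃ C > 0, ∀ N M : ℕ, 1 ≤ M → M < N →
      ∑ p ∈ ANM N M,
          |(p.1 : ℝ)| ^ (2 * s) * |(p.2.1 : ℝ)| ^ (s + 1) * |(p.2.2 : ℝ)| ^ (s + 1) /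
            (|(p.1 : ℝ)| ^ (2 * s + 1) * |(p.2.1 : ℝ)| ^ (2 * s + 1) *
              |(p.2.2 : ℝ)| ^ (2 * s + 1))
        ≤ C * (M : ℝ) ^ (-(s - 1 / 2)) := by
  classical
  have hs0 : (0:ℝ) < s := by linarith
  set t : ℝ := min s (3/4) with htdef
  have ht1 : 1/2 < t := lt_min hs (by norm_num)
  have ht2 : t ≤ 3/4 := min_le_right _ _
  have hts : t ≤ s := min_le_left _ _
  set KK : ℝ := 2^s + 2 with hKKdef
  have hKK0 : (0:ℝ) ≤ KK := by rw [hKKdef]; positivity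
  have hKK2s : 2^s ≤ KK := by rw [hKKdef]; linarith
  have hKK2 : (2:ℝ) ≤ KK := by
    rw [hKKdef]
    have : (0:ℝ) < 2^s := by positivity
    linarith
  set CI : ℝ := KK * 4 * ((1/(1-t)) * (1/((1+s)-(1-t)-1))) with hCIdef
  set CII : ℝ := KK * 4 * ((1/(1-(3/2-t))) * (1/((2*s)-(1-(3/2-t))-1))) with hCIIdef
  have h1t : (0:ℝ) < 1 - t := by linarith
  have h2t : (0:ℝ) < (1+s)-(1-t)-1 := by linarith
  have h3t : (0:ℝ) < 1-(3/2-t) := by linarith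
  have h4t : (0:ℝ) < (2*s)-(1-(3/2-t))-1 := by linarith
  have hCI0 : 0 ≤ CI := by
    rw [hCIdef]
    apply mul_nonneg (by linarith)
    apply mul_nonneg (le_of_lt (by positivity)) (le_of_lt (by positivity))
  have hCII0 : 0 ≤ CII := by
    rw [hCIIdef]
    apply mul_nonneg (by linarith)
    apply mul_nonneg (le_of_lt (by positivity)) (le_of_lt (by positivity))
  refine ⟨4*CI + 2*CII + 1, by linarith, ?_⟩
  intro N M hM hMN
  set F : ℤ×ℤ×ℤ → ℝ :=
    fun p => |(p.1:ℝ)|^(-(1:ℝ)) * |(p.2.1:ℝ)|^(-s) * |(p.2.2:ℝ)|^(-s) with hFdef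
  have habs : ∀ {n : ℤ}, n ≠ 0 → (0:ℝ) < |(n:ℝ)| := by
    intro n hn
    rw [abs_pos]
    exact_mod_cast hn
  have hFnn : ∀ p ∈ ANM N M, 0 ≤ F p := by
    intro p _
    rw [hFdef]
    positivity
  set P1 : ℤ×ℤ×ℤ → Prop := fun p => p.2.1.natAbs ≤ p.2.2.natAbs ∧ p.2.2.natAbs ≤ p.1.natAbs
    with hP1def
  set P2 : ℤ×ℤ×ℤ → Prop := fun p => p.2.2.natAbs ≤ p.2.1.natAbs ∧ p.2.1.natAbs ≤ p.1.natAbs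
    with hP2def
  set P3 : ℤ×ℤ×ℤ → Prop := fun p => p.1.natAbs ≤ p.2.2.natAbs ∧ p.2.2.natAbs ≤ p.2.1.natAbs
    with hP3def
  set P4 : ℤ×ℤ×ℤ → Prop := fun p => p.2.2.natAbs ≤ p.1.natAbs ∧ p.1.natAbs ≤ p.2.1.natAbs
    with hP4def
  set P5 : ℤ×ℤ×ℤ → Prop := fun p => p.2.1.natAbs ≤ p.1.natAbs ∧ p.1.natAbs ≤ p.2.2.natAbs
    with hP5def
  set P6 : ℤ×ℤ×ℤ → Prop := fun p => p.1.natAbs ≤ p.2.1.natAbs ∧ p.2.1.natAbs ≤ p.2.2.natAbs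
    with hP6def
  have hcover : ∀ p ∈ ANM N M, P1 p ∨ P2 p ∨ P3 p ∨ P4 p ∨ P5 p ∨ P6 p := by
    intro p _
    simp only [hP1def, hP2def, hP3def, hP4def, hP5def, hP6def]
    omega
  have reg1 : ∀ S : Finset (ℤ×ℤ×ℤ), (∀ p ∈ S, p ∈ ANM N M ∧ P1 p) →
      ∑ p ∈ S, F p ≤ CI * (M:ℝ)^(1/2-s) := by
    intro S hS
    rw [hCIdef]
    apply aux_region_le s N M hM (1+s) s t KK hKK0 (by linarith) (by linarith) hts
      (by linarith) (by linarith) S F (fun p => p.1) (fun p => p.2.1)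
    · intro p hp q hq hu hv
      have f1 := (aux_ANM_facts (hS p hp).1).2.2.2.1
      have f2 := (aux_ANM_facts (hS q hq).1).2.2.2.1
      have h22 : p.2.2 = q.2.2 := by omega
      exact Prod.ext hu (Prod.ext hv h22)
    · intro p hp
      obtain ⟨hpA, hP⟩ := hS p hp
      have f := aux_ANM_facts hpA
      rw [hP1def] at hP
      refine ⟨?_, ?_, ?_, ?_, ?_⟩ <;> omega
    · intro p hp
      obtain ⟨hpA, hP⟩ := hS p hp
      have f := aux_ANM_facts hpA
      rw [hP1def] at hP
      have hA1 : (1:ℝ) ≤ (p.1.natAbs:ℝ) := by exact_mod_cast (show 1 ≤ p.1.natAbs by omega)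
      have hB1 : (1:ℝ) ≤ (p.2.1.natAbs:ℝ) := by exact_mod_cast (show 1 ≤ p.2.1.natAbs by omega)
      have hC1 : (1:ℝ) ≤ (p.2.2.natAbs:ℝ) := by exact_mod_cast (show 1 ≤ p.2.2.natAbs by omega)
      have htri : (p.1.natAbs:ℝ) ≤ 2*(p.2.2.natAbs:ℝ) := by
        exact_mod_cast (show p.1.natAbs ≤ 2*p.2.2.natAbs by omega)
      have hFp : F p = (p.1.natAbs:ℝ)^(-(1:ℝ)) * (p.2.1.natAbs:ℝ)^(-s) * (p.2.2.natAbs:ℝ)^(-s) := by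
        rw [hFdef]
        rw [aux_natAbs_cast_real, aux_natAbs_cast_real, aux_natAbs_cast_real]
      rw [hFp]
      exact aux_pt_main1 s _ _ _ KK hs0 hA1 hB1 hC1 htri hKK2s
  have reg2 : ∀ S : Finset (ℤ×ℤ×ℤ), (∀ p ∈ S, p ∈ ANM N M ∧ P2 p) →
      ∑ p ∈ S, F p ≤ CI * (M:ℝ)^(1/2-s) := by
    intro S hS
    rw [hCIdef]
    apply aux_region_le s N M hM (1+s) s t KK hKK0 (by linarith) (by linarith) hts
      (by linarith) (by linarith) S F (fun p => p.1) (fun p => p.2.2)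
    · intro p hp q hq hu hv
      have f1 := (aux_ANM_facts (hS p hp).1).2.2.2.1
      have f2 := (aux_ANM_facts (hS q hq).1).2.2.2.1
      have h21 : p.2.1 = q.2.1 := by omega
      exact Prod.ext hu (Prod.ext h21 hv)
    · intro p hp
      obtain ⟨hpA, hP⟩ := hS p hp
      have f := aux_ANM_facts hpA
      rw [hP2def] at hP
      refine ⟨?_, ?_, ?_, ?_, ?_⟩ <;> omega
    · intro p hp
      obtain ⟨hpA, hP⟩ := hS p hp
      have f := aux_ANM_facts hpA
      rw [hP2def] at hP
      have hA1 : (1:ℝ) ≤ (p.1.natAbs:ℝ) := by exact_mod_cast (show 1 ≤ p.1.natAbs by omega)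
      have hB1 : (1:ℝ) ≤ (p.2.1.natAbs:ℝ) := by exact_mod_cast (show 1 ≤ p.2.1.natAbs by omega)
      have hC1 : (1:ℝ) ≤ (p.2.2.natAbs:ℝ) := by exact_mod_cast (show 1 ≤ p.2.2.natAbs by omega)
      have htri : (p.1.natAbs:ℝ) ≤ 2*(p.2.1.natAbs:ℝ) := by
        exact_mod_cast (show p.1.natAbs ≤ 2*p.2.1.natAbs by omega)
      have hFp : F p = (p.1.natAbs:ℝ)^(-(1:ℝ)) * (p.2.1.natAbs:ℝ)^(-s) * (p.2.2.natAbs:ℝ)^(-s) := by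
        rw [hFdef]
        rw [aux_natAbs_cast_real, aux_natAbs_cast_real, aux_natAbs_cast_real]
      calc F p = (p.1.natAbs:ℝ)^(-(1:ℝ)) * (p.2.2.natAbs:ℝ)^(-s) * (p.2.1.natAbs:ℝ)^(-s) := by
            rw [hFp]; ring
        _ ≤ KK * ((p.1.natAbs:ℝ)^(-(1+s)) * (p.2.2.natAbs:ℝ)^(-s)) :=
            aux_pt_main1 s _ _ _ KK hs0 hA1 hC1 hB1 htri hKK2s
  have reg3 : ∀ S : Finset (ℤ×ℤ×ℤ), (∀ p ∈ S, p ∈ ANM N M ∧ P3 p) →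
      ∑ p ∈ S, F p ≤ CII * (M:ℝ)^(1/2-s) := by
    intro S hS
    rw [hCIIdef]
    apply aux_region_le s N M hM (2*s) 1 (3/2-t) KK hKK0 (by linarith) (by linarith)
      (by linarith) (by linarith) (by linarith) S F (fun p => p.2.1) (fun p => p.1)
    · intro p hp q hq hu hv
      have f1 := (aux_ANM_facts (hS p hp).1).2.2.2.1
      have f2 := (aux_ANM_facts (hS q hq).1).2.2.2.1
      have h22 : p.2.2 = q.2.2 := by omega
      exact Prod.ext hv (Prod.ext hu h22)
    · intro p hp
      obtain ⟨hpA, hP⟩ := hS p hp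
      have f := aux_ANM_facts hpA
      rw [hP3def] at hP
      refine ⟨?_, ?_, ?_, ?_, ?_⟩ <;> omega
    · intro p hp
      obtain ⟨hpA, hP⟩ := hS p hp
      have f := aux_ANM_facts hpA
      rw [hP3def] at hP
      have hA1 : (1:ℝ) ≤ (p.1.natAbs:ℝ) := by exact_mod_cast (show 1 ≤ p.1.natAbs by omega)
      have hB1 : (1:ℝ) ≤ (p.2.1.natAbs:ℝ) := by exact_mod_cast (show 1 ≤ p.2.1.natAbs by omega)
      have hC1 : (1:ℝ) ≤ (p.2.2.natAbs:ℝ) := by exact_mod_cast (show 1 ≤ p.2.2.natAbs by omega)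
      have htri : (p.2.1.natAbs:ℝ) ≤ 2*(p.2.2.natAbs:ℝ) := by
        exact_mod_cast (show p.2.1.natAbs ≤ 2*p.2.2.natAbs by omega)
      have hFp : F p = (p.1.natAbs:ℝ)^(-(1:ℝ)) * (p.2.1.natAbs:ℝ)^(-s) * (p.2.2.natAbs:ℝ)^(-s) := by
        rw [hFdef]
        rw [aux_natAbs_cast_real, aux_natAbs_cast_real, aux_natAbs_cast_real]
      rw [hFp]
      exact aux_pt_main3 s _ _ _ KK hs0 hA1 hB1 hC1 htri hKK2s
  have reg4 : ∀ S : Finset (ℤ×ℤ×ℤ), (∀ p ∈ S, p ∈ ANM N M ∧ P4 p) →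
      ∑ p ∈ S, F p ≤ CI * (M:ℝ)^(1/2-s) := by
    intro S hS
    rw [hCIdef]
    apply aux_region_le s N M hM (1+s) s t KK hKK0 (by linarith) (by linarith) hts
      (by linarith) (by linarith) S F (fun p => p.2.1) (fun p => p.2.2)
    · intro p hp q hq hu hv
      have f1 := (aux_ANM_facts (hS p hp).1).2.2.2.1
      have f2 := (aux_ANM_facts (hS q hq).1).2.2.2.1
      have h11 : p.1 = q.1 := by omega
      exact Prod.ext h11 (Prod.ext hu hv)
    · intro p hp
      obtain ⟨hpA, hP⟩ := hS p hp
      have f := aux_ANM_facts hpA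
      rw [hP4def] at hP
      refine ⟨?_, ?_, ?_, ?_, ?_⟩ <;> omega
    · intro p hp
      obtain ⟨hpA, hP⟩ := hS p hp
      have f := aux_ANM_facts hpA
      rw [hP4def] at hP
      have hA1 : (1:ℝ) ≤ (p.1.natAbs:ℝ) := by exact_mod_cast (show 1 ≤ p.1.natAbs by omega)
      have hB1 : (1:ℝ) ≤ (p.2.1.natAbs:ℝ) := by exact_mod_cast (show 1 ≤ p.2.1.natAbs by omega)
      have hC1 : (1:ℝ) ≤ (p.2.2.natAbs:ℝ) := by exact_mod_cast (show 1 ≤ p.2.2.natAbs by omega)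
      have htri : (p.2.1.natAbs:ℝ) ≤ 2*(p.1.natAbs:ℝ) := by
        exact_mod_cast (show p.2.1.natAbs ≤ 2*p.1.natAbs by omega)
      have hFp : F p = (p.1.natAbs:ℝ)^(-(1:ℝ)) * (p.2.1.natAbs:ℝ)^(-s) * (p.2.2.natAbs:ℝ)^(-s) := by
        rw [hFdef]
        rw [aux_natAbs_cast_real, aux_natAbs_cast_real, aux_natAbs_cast_real]
      rw [hFp]
      exact aux_pt_main2 s _ _ _ KK hs0 hA1 hB1 hC1 htri hKK2
  have reg5 : ∀ S : Finset (ℤ×ℤ×ℤ), (∀ p ∈ S, p ∈ ANM N M ∧ P5 p) →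
      ∑ p ∈ S, F p ≤ CI * (M:ℝ)^(1/2-s) := by
    intro S hS
    rw [hCIdef]
    apply aux_region_le s N M hM (1+s) s t KK hKK0 (by linarith) (by linarith) hts
      (by linarith) (by linarith) S F (fun p => p.2.2) (fun p => p.2.1)
    · intro p hp q hq hu hv
      have f1 := (aux_ANM_facts (hS p hp).1).2.2.2.1
      have f2 := (aux_ANM_facts (hS q hq).1).2.2.2.1
      have h11 : p.1 = q.1 := by omega
      exact Prod.ext h11 (Prod.ext hv hu)
    · intro p hp
      obtain ⟨hpA, hP⟩ := hS p hp
      have f := aux_ANM_facts hpA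
      rw [hP5def] at hP
      refine ⟨?_, ?_, ?_, ?_, ?_⟩ <;> omega
    · intro p hp
      obtain ⟨hpA, hP⟩ := hS p hp
      have f := aux_ANM_facts hpA
      rw [hP5def] at hP
      have hA1 : (1:ℝ) ≤ (p.1.natAbs:ℝ) := by exact_mod_cast (show 1 ≤ p.1.natAbs by omega)
      have hB1 : (1:ℝ) ≤ (p.2.1.natAbs:ℝ) := by exact_mod_cast (show 1 ≤ p.2.1.natAbs by omega)
      have hC1 : (1:ℝ) ≤ (p.2.2.natAbs:ℝ) := by exact_mod_cast (show 1 ≤ p.2.2.natAbs by omega)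
      have htri : (p.2.2.natAbs:ℝ) ≤ 2*(p.1.natAbs:ℝ) := by
        exact_mod_cast (show p.2.2.natAbs ≤ 2*p.1.natAbs by omega)
      have hFp : F p = (p.1.natAbs:ℝ)^(-(1:ℝ)) * (p.2.1.natAbs:ℝ)^(-s) * (p.2.2.natAbs:ℝ)^(-s) := by
        rw [hFdef]
        rw [aux_natAbs_cast_real, aux_natAbs_cast_real, aux_natAbs_cast_real]
      calc F p = (p.1.natAbs:ℝ)^(-(1:ℝ)) * (p.2.2.natAbs:ℝ)^(-s) * (p.2.1.natAbs:ℝ)^(-s) := by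
            rw [hFp]; ring
        _ ≤ KK * ((p.2.2.natAbs:ℝ)^(-(1+s)) * (p.2.1.natAbs:ℝ)^(-s)) :=
            aux_pt_main2 s _ _ _ KK hs0 hA1 hC1 hB1 htri hKK2
  have reg6 : ∀ S : Finset (ℤ×ℤ×ℤ), (∀ p ∈ S, p ∈ ANM N M ∧ P6 p) →
      ∑ p ∈ S, F p ≤ CII * (M:ℝ)^(1/2-s) := by
    intro S hS
    rw [hCIIdef]
    apply aux_region_le s N M hM (2*s) 1 (3/2-t) KK hKK0 (by linarith) (by linarith)
      (by linarith) (by linarith) (by linarith) S F (fun p => p.2.2) (fun p => p.1)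
    · intro p hp q hq hu hv
      have f1 := (aux_ANM_facts (hS p hp).1).2.2.2.1
      have f2 := (aux_ANM_facts (hS q hq).1).2.2.2.1
      have h21 : p.2.1 = q.2.1 := by omega
      exact Prod.ext hv (Prod.ext h21 hu)
    · intro p hp
      obtain ⟨hpA, hP⟩ := hS p hp
      have f := aux_ANM_facts hpA
      rw [hP6def] at hP
      refine ⟨?_, ?_, ?_, ?_, ?_⟩ <;> omega
    · intro p hp
      obtain ⟨hpA, hP⟩ := hS p hp
      have f := aux_ANM_facts hpA
      rw [hP6def] at hP
      have hA1 : (1:ℝ) ≤ (p.1.natAbs:ℝ) := by exact_mod_cast (show 1 ≤ p.1.natAbs by omega)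
      have hB1 : (1:ℝ) ≤ (p.2.1.natAbs:ℝ) := by exact_mod_cast (show 1 ≤ p.2.1.natAbs by omega)
      have hC1 : (1:ℝ) ≤ (p.2.2.natAbs:ℝ) := by exact_mod_cast (show 1 ≤ p.2.2.natAbs by omega)
      have htri : (p.2.2.natAbs:ℝ) ≤ 2*(p.2.1.natAbs:ℝ) := by
        exact_mod_cast (show p.2.2.natAbs ≤ 2*p.2.1.natAbs by omega)
      have hFp : F p = (p.1.natAbs:ℝ)^(-(1:ℝ)) * (p.2.1.natAbs:ℝ)^(-s) * (p.2.2.natAbs:ℝ)^(-s) := by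
        rw [hFdef]
        rw [aux_natAbs_cast_real, aux_natAbs_cast_real, aux_natAbs_cast_real]
      calc F p = (p.1.natAbs:ℝ)^(-(1:ℝ)) * (p.2.2.natAbs:ℝ)^(-s) * (p.2.1.natAbs:ℝ)^(-s) := by
            rw [hFp]; ring
        _ ≤ KK * ((p.2.2.natAbs:ℝ)^(-(2*s)) * (p.1.natAbs:ℝ)^(-(1:ℝ))) :=
            aux_pt_main3 s _ _ _ KK hs0 hA1 hC1 hB1 htri hKK2s
  have hMpos : (0:ℝ) ≤ (M:ℝ)^((1:ℝ)/2-s) := by positivity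
  calc ∑ p ∈ ANM N M,
          |(p.1 : ℝ)| ^ (2 * s) * |(p.2.1 : ℝ)| ^ (s + 1) * |(p.2.2 : ℝ)| ^ (s + 1) /
            (|(p.1 : ℝ)| ^ (2 * s + 1) * |(p.2.1 : ℝ)| ^ (2 * s + 1) *
              |(p.2.2 : ℝ)| ^ (2 * s + 1))
      = ∑ p ∈ ANM N M, F p := by
        refine Finset.sum_congr rfl (fun p hp => ?_)
        have f := aux_ANM_facts hp
        rw [hFdef]
        exact aux_simp_term s _ _ _ (habs f.1) (habs f.2.1) (habs f.2.2.1)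
    _ ≤ ∑ p ∈ (ANM N M).filter P1, F p + (∑ p ∈ (ANM N M).filter P2, F p +
        (∑ p ∈ (ANM N M).filter P3, F p + (∑ p ∈ (ANM N M).filter P4, F p +
        (∑ p ∈ (ANM N M).filter P5, F p + ∑ p ∈ (ANM N M).filter P6, F p)))) :=
        aux_sum_split6 (ANM N M) F hFnn P1 P2 P3 P4 P5 P6 hcover
    _ ≤ CI * (M:ℝ)^(1/2-s) + (CI * (M:ℝ)^(1/2-s) + (CII * (M:ℝ)^(1/2-s) +
        (CI * (M:ℝ)^(1/2-s) + (CI * (M:ℝ)^(1/2-s) + CII * (M:ℝ)^(1/2-s))))) := by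
        refine add_le_add (reg1 _ (fun p hp => Finset.mem_filter.mp hp))
          (add_le_add (reg2 _ (fun p hp => Finset.mem_filter.mp hp))
          (add_le_add (reg3 _ (fun p hp => Finset.mem_filter.mp hp))
          (add_le_add (reg4 _ (fun p hp => Finset.mem_filter.mp hp))
          (add_le_add (reg5 _ (fun p hp => Finset.mem_filter.mp hp))
          (reg6 _ (fun p hp => Finset.mem_filter.mp hp))))))
    _ = (4*CI + 2*CII) * (M:ℝ)^(1/2-s) := by ring
    _ ≤ (4*CI + 2*CII + 1) * (M:ℝ)^(-(s-1/2)) := by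
        rw [show -(s-1/2) = 1/2 - s by ring]
        refine mul_le_mul_of_nonneg_right (by linarith) hMpos
end

section
/- Let s > 1, κ > 0 and R > 0, and set a := 4κs/(2s−1) and b := 2/(2s−1). There are constants C, c, K > 0, depending only on s and κ, such that for every integer N ≥ 2 and every t ≥ K·(ln N)^{2/κ}: P( { ‖P_N u‖_{H^{s}} ≥ t^{κ} } ∩ { 𝓔(u) ≤ R } ) ≤ C·exp( −c·t^{a}/R^{b} ). -/
open MeasureTheory ProbabilityTheory Real

/-- The complex Gaussian coefficients `g_n = (h_n + i l_n)/√2` for `n ≥ 1`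
and `g_{-n} = conj g_n`, built from the real families `h, l` (where `h k`
represents `h_{k+1}`). -/
noncomputable def gcoef {Ω : Type*} (h l : ℕ → Ω → ℝ) (n : ℤ) (ω : Ω) : ℂ :=
  if 0 < n then ((h (n - 1).toNat ω : ℂ) + Complex.I * (l (n - 1).toNat ω : ℂ)) / (Real.sqrt 2 : ℂ)
  else (starRingEnd ℂ)
    (((h (-n - 1).toNat ω : ℂ) + Complex.I * (l (-n - 1).toNat ω : ℂ)) / (Real.sqrt 2 : ℂ))

/-- The random Fourier coefficients `û(n) = g_n / |n|^{s+1/2}`. -/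
noncomputable def ucoef {Ω : Type*} (s : ℝ) (h l : ℕ → Ω → ℝ) (n : ℤ) (ω : Ω) : ℂ :=
  gcoef h l n ω / ((|(n : ℝ)| ^ (s + 1 / 2) : ℝ) : ℂ)

/-- The truncated Sobolev norm `‖P_N u‖_{H^σ} = (Σ_{n=1}^N n^{2σ}|û(n)|²)^{1/2}`. -/
noncomputable def HsN {Ω : Type*} (s σ : ℝ) (h l : ℕ → Ω → ℝ) (N : ℕ) (ω : Ω) : ℝ :=
  Real.sqrt (∑ n ∈ Finset.Icc 1 N, (n : ℝ) ^ (2 * σ) * ‖ucoef s h l (n : ℤ) ω‖ ^ 2)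

/-- The conserved energy `𝓔(u)` with `𝓔(u)² = 4π Σ_{n≥1} (1+n)|û(n)|²`. -/
noncomputable def energ {Ω : Type*} (s : ℝ) (h l : ℕ → Ω → ℝ) (ω : Ω) : ℝ :=
  Real.sqrt (4 * π * ∑' n : ℕ, ((n : ℝ) + 2) * ‖ucoef s h l ((n : ℤ) + 1) ω‖ ^ 2)

lemma exp_neg_le_aux {u : ℝ} (h0 : 0 ≤ u) (h1 : u ≤ 1/2) : Real.exp (-(2*u)) ≤ 1 - u := by
  have h2 : 1 + 2*u ≤ Real.exp (2*u) := by
    have := Real.add_one_le_exp (2*u); linarith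
  have h3 : 0 < 1 + 2*u := by linarith
  rw [Real.exp_neg]
  have h5 : (Real.exp (2*u))⁻¹ ≤ (1+2*u)⁻¹ := inv_anti₀ h3 h2
  refine h5.trans ?_
  rw [inv_le_iff_one_le_mul₀ h3]
  nlinarith
lemma gauss_exp_sq (c : ℝ) (h0 : 0 ≤ c) (h1 : c ≤ 1/4) :
    Integrable (fun x => Real.exp (c * x^2)) (gaussianReal 0 1)
    ∧ ∫ x, Real.exp (c * x^2) ∂(gaussianReal 0 1) ≤ Real.exp (2*c) := by
  have hv : (1 : NNReal) ≠ 0 := one_ne_zero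
  set b : ℝ := 1/2 - c with hbdef
  have hb : (0:ℝ) < b := by rw [hbdef]; linarith
  have hpdf : ∀ x : ℝ, gaussianPDFReal 0 1 x = (Real.sqrt (2*π))⁻¹ * Real.exp (-(1/2) * x^2) := by
    intro x; unfold gaussianPDFReal; push_cast; ring_nf
  set f : ℝ → NNReal := fun x => (gaussianPDFReal 0 1 x).toNNReal with hf
  have hfm : Measurable f := (measurable_gaussianPDFReal 0 1).real_toNNReal
  have hrw : gaussianReal 0 1 = volume.withDensity (fun x => (f x : ENNReal)) := by
    rw [gaussianReal_of_var_ne_zero _ hv, gaussianPDF_def]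
    rfl
  have hprod : ∀ x : ℝ, (f x : ℝ) * Real.exp (c * x^2)
      = (Real.sqrt (2*π))⁻¹ * Real.exp (-b * x^2) := by
    intro x
    rw [hf, Real.coe_toNNReal _ (gaussianPDFReal_nonneg 0 1 x), hpdf x,
      mul_assoc, ← Real.exp_add]
    rw [hbdef]; ring_nf
  constructor
  · rw [hrw, integrable_withDensity_iff_integrable_coe_smul hfm]
    simp_rw [smul_eq_mul, hprod]
    exact (integrable_exp_neg_mul_sq hb).const_mul _
  · rw [hrw, integral_withDensity_eq_integral_smul hfm]
    simp_rw [NNReal.smul_def, smul_eq_mul, hprod]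
    rw [integral_const_mul, integral_gaussian]
    have hsq : Real.sqrt (π / b) ≤ Real.sqrt (2*π) * Real.exp (2*c) := by
      have h2 : Real.exp (-(2*(2*c))) ≤ 1 - 2*c := exp_neg_le_aux (by linarith) (by linarith)
      have hπ := Real.pi_pos
      have hexp : (0:ℝ) < Real.exp (4*c) := Real.exp_pos _
      have key : π / b ≤ 2*π * Real.exp (4*c) := by
        rw [div_le_iff₀ hb, hbdef]
        have h5 : Real.exp (-(4*c)) * Real.exp (4*c) = 1 := by rw [← Real.exp_add]; norm_num
        have h4 : Real.exp (-(4*c)) ≤ 1 - 2*c := by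
          have e : (-(2*(2*c))) = -(4*c) := by ring
          rwa [e] at h2
        nlinarith [mul_le_mul_of_nonneg_right h4 hexp.le]
      calc Real.sqrt (π / b) ≤ Real.sqrt (2*π * Real.exp (4*c)) := Real.sqrt_le_sqrt key
        _ = Real.sqrt (2*π) * Real.exp (2*c) := by
            rw [Real.sqrt_mul (by positivity)]
            congr 1
            rw [show (4:ℝ)*c = 2*c + 2*c by ring, Real.exp_add]
            exact Real.sqrt_mul_self (Real.exp_nonneg _)
    have hs2 : (0:ℝ) < Real.sqrt (2*π) := Real.sqrt_pos.mpr (by positivity)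
    calc (Real.sqrt (2*π))⁻¹ * Real.sqrt (π/b) ≤ (Real.sqrt (2*π))⁻¹ * (Real.sqrt (2*π) * Real.exp (2*c)) := by
          apply mul_le_mul_of_nonneg_left hsq (by positivity)
      _ = Real.exp (2*c) := by field_simp
lemma iIndepFun_congr {Ω ι : Type*} [MeasurableSpace Ω] {μ : Measure Ω} {β : ι → Type*}
    [m : ∀ i, MeasurableSpace (β i)] {f g : ∀ i, Ω → β i}
    (hfg : ∀ i, f i =ᵐ[μ] g i) (hf : iIndepFun f μ) : iIndepFun g μ := by
  rw [iIndepFun_iff_measure_inter_preimage_eq_mul] at hf ⊢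
  intro S sets hmeas
  have hpre : ∀ i, (f i ⁻¹' sets i : Set Ω) =ᵐ[μ] (g i ⁻¹' sets i : Set Ω) := by
    intro i
    rw [Filter.eventuallyEq_set]
    filter_upwards [hfg i] with ω hω
    show f i ω ∈ sets i ↔ g i ω ∈ sets i
    rw [hω]
  have h1 : (⋂ i ∈ S, f i ⁻¹' sets i : Set Ω) =ᵐ[μ] (⋂ i ∈ S, g i ⁻¹' sets i : Set Ω) := by
    rw [Filter.eventuallyEq_set]
    have := (Filter.eventually_all_finset S (l := ae μ)).2 (fun i _ => Filter.eventuallyEq_set.1 (hpre i))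
    filter_upwards [this] with ω hω
    simp only [Set.mem_iInter]
    constructor
    · intro hall i hi; exact (hω i hi).1 (hall i hi)
    · intro hall i hi; exact (hω i hi).2 (hall i hi)
  rw [← measure_congr h1, hf S hmeas]
  exact Finset.prod_congr rfl fun i hi => measure_congr (hpre i)

lemma ucoef_norm_sq {Ω : Type*} (s : ℝ) (h l : ℕ → Ω → ℝ) (k : ℕ) (ω : Ω) :
    ‖ucoef s h l ((k : ℤ) + 1) ω‖ ^ 2
      = ((h k ω)^2 + (l k ω)^2) / (2 * ((k : ℝ) + 1) ^ (2*s + 1)) := by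
  have hpos : (0 : ℤ) < (k : ℤ) + 1 := by positivity
  have htn : (((k : ℤ) + 1 - 1).toNat) = k := by simp
  have hcast : ((((k : ℤ) + 1 : ℤ) : ℝ)) = (k : ℝ) + 1 := by push_cast; ring
  have hknn : (0:ℝ) ≤ (k : ℝ) + 1 := by positivity
  rw [ucoef, gcoef, if_pos hpos, htn]
  rw [norm_div, div_pow]
  have h1 : ‖((h k ω : ℂ) + Complex.I * (l k ω : ℂ)) / (Real.sqrt 2 : ℂ)‖ ^ 2
      = ((h k ω)^2 + (l k ω)^2) / 2 := by
    rw [norm_div, div_pow]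
    have h2 : ((h k ω : ℂ) + Complex.I * (l k ω : ℂ)) = ((h k ω : ℝ) : ℂ) + ((l k ω : ℝ) : ℂ) * Complex.I := by ring
    rw [h2, Complex.norm_add_mul_I, Real.sq_sqrt (by positivity)]
    have : ‖((Real.sqrt 2 : ℝ) : ℂ)‖ = Real.sqrt 2 := by
      rw [Complex.norm_real, Real.norm_eq_abs, abs_of_nonneg (Real.sqrt_nonneg 2)]
    rw [this, Real.sq_sqrt (by norm_num : (0:ℝ) ≤ 2)]
  rw [h1]
  have h3 : ‖((|(((k : ℤ) + 1 : ℤ) : ℝ)| ^ (s + 1 / 2) : ℝ) : ℂ)‖ ^ 2 = ((k:ℝ)+1) ^ (2*s+1) := by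
    rw [Complex.norm_real, Real.norm_eq_abs, hcast, abs_of_nonneg hknn,
      abs_of_nonneg (Real.rpow_nonneg hknn _), ← Real.rpow_natCast (((k:ℝ)+1) ^ (s + 1/2)) 2,
      ← Real.rpow_mul hknn]
    norm_num
    congr 1
    ring
  rw [h3, div_div]

lemma ucoef_congr {Ω : Type*} (s : ℝ) (h l h' l' : ℕ → Ω → ℝ) (ω : Ω)
    (hh : ∀ j, h j ω = h' j ω) (hl : ∀ j, l j ω = l' j ω) (n : ℤ) :
    ucoef s h l n ω = ucoef s h' l' n ω := by
  unfold ucoef gcoef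
  split_ifs <;> rw [hh, hl]

lemma coeff_simp (s : ℝ) (k : ℕ) (Wk : ℝ) :
    ((k:ℝ)+1)^(2*s) * (Wk / (2*((k:ℝ)+1)^(2*s+1))) = Wk / (2*((k:ℝ)+1)) := by
  have hp : (0:ℝ) < (k:ℝ)+1 := by positivity
  rw [Real.rpow_add hp, Real.rpow_one]
  have h1 : ((k:ℝ)+1)^(2*s) ≠ 0 := ne_of_gt (Real.rpow_pos_of_pos hp _)
  field_simp

lemma det_lemma (s κ t R : ℝ) (hs : 1 < s) (ht0 : 0 < t) (hκ : 0 < κ) (hR : 0 < R) (N : ℕ)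
    (W : ℕ → ℝ) (hW : ∀ k, 0 ≤ W k)
    (hsum : Summable (fun k : ℕ => ((k:ℝ)+2) * (W k / (2*((k:ℝ)+1)^(2*s+1)))))
    (henerg : Real.sqrt (4*π* ∑' k : ℕ, ((k:ℝ)+2) * (W k / (2*((k:ℝ)+1)^(2*s+1)))) ≤ R)
    (hHs : t^κ ≤ Real.sqrt (∑ k ∈ Finset.range N, W k / (2*((k:ℝ)+1)))) :
    t^(2*κ)/2 ≤ ∑ k ∈ Finset.Ico (⌊(2*π*t^(2*κ)/R^2) ^ ((1:ℝ)/(2*s-1))⌋₊) N,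
      W k / (2*((k:ℝ)+1)) := by
  have hπ := Real.pi_pos
  set τ := t^(2*κ) with hτdef
  have hτ : 0 < τ := Real.rpow_pos_of_pos ht0 _
  set Xr : ℝ := (2*π*τ/R^2) ^ ((1:ℝ)/(2*s-1)) with hXrdef
  have hXrpos : 0 < Xr := Real.rpow_pos_of_pos (by positivity) _
  set m := ⌊Xr⌋₊ with hmdef
  set T := ∑' k : ℕ, ((k:ℝ)+2) * (W k / (2*((k:ℝ)+1)^(2*s+1))) with hTdef
  have hTnn : 0 ≤ T := tsum_nonneg fun k => mul_nonneg (by positivity) (div_nonneg (hW k) (by positivity))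
  -- energy bound
  have hTle : T ≤ R^2/(4*π) := by
    have h1 : 4*π*T ≤ R^2 := by
      have h2 := Real.sq_sqrt (show (0:ℝ) ≤ 4*π*T by positivity)
      nlinarith [pow_le_pow_left₀ (Real.sqrt_nonneg (4*π*T)) henerg 2]
    rw [le_div_iff₀ (by positivity)]; linarith
  -- total sum bound
  have htotal : τ ≤ ∑ k ∈ Finset.range N, W k / (2*((k:ℝ)+1)) := by
    have h1 : (t^κ)^2 ≤ ∑ k ∈ Finset.range N, W k / (2*((k:ℝ)+1)) := by
      have hnn : (0:ℝ) ≤ ∑ k ∈ Finset.range N, W k / (2*((k:ℝ)+1)) :=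
        Finset.sum_nonneg fun k _ => div_nonneg (hW k) (by positivity)
      nlinarith [Real.sq_sqrt hnn, Real.sqrt_nonneg (∑ k ∈ Finset.range N, W k / (2*((k:ℝ)+1))),
        Real.rpow_nonneg ht0.le κ]
    calc τ = (t^κ)^2 := by
          rw [← Real.rpow_natCast (t^κ) 2, ← Real.rpow_mul ht0.le]
          norm_num [hτdef]; ring_nf
      _ ≤ _ := h1
  -- low frequency bound
  have hlow : ∑ k ∈ Finset.range m, W k / (2*((k:ℝ)+1)) ≤ τ/2 := by
    have hstep : ∀ k ∈ Finset.range m, W k / (2*((k:ℝ)+1))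
        ≤ (m:ℝ)^(2*s-1) * (((k:ℝ)+2) * (W k / (2*((k:ℝ)+1)^(2*s+1)))) := by
      intro k hk
      have hk1 : (0:ℝ) < (k:ℝ)+1 := by positivity
      have hkm : ((k:ℝ)+1) ≤ (m:ℝ) := by
        have := Finset.mem_range.1 hk
        exact_mod_cast Nat.succ_le_of_lt this
      have hr1 : ((k:ℝ)+1)^(2*s-1) ≤ (m:ℝ)^(2*s-1) :=
        Real.rpow_le_rpow hk1.le hkm (by linarith)
      have hsplit : ((k:ℝ)+1)^(2*s+1) = ((k:ℝ)+1)^(2*s-1) * ((k:ℝ)+1)^2 := by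
        rw [← Real.rpow_natCast ((k:ℝ)+1) 2, ← Real.rpow_add hk1]
        congr 1
        push_cast
        ring
      have h2 : W k / (2*((k:ℝ)+1)) ≤ ((k:ℝ)+1)^(2*s-1) * (((k:ℝ)+2) * (W k / (2*((k:ℝ)+1)^(2*s+1)))) := by
        rw [hsplit]
        have hrp : (0:ℝ) < ((k:ℝ)+1)^(2*s-1) := Real.rpow_pos_of_pos hk1 _
        have hWk := hW k
        have hrhs : ((k:ℝ)+1)^(2*s-1) * (((k:ℝ)+2) * (W k / (2*(((k:ℝ)+1)^(2*s-1) * ((k:ℝ)+1)^2))))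
            = ((k:ℝ)+2) * W k / (2*((k:ℝ)+1)^2) := by
          field_simp
        rw [hrhs, div_le_div_iff₀ (by positivity) (by positivity)]
        nlinarith [mul_nonneg hWk hk1.le]
      refine h2.trans ?_
      have he : (0:ℝ) ≤ ((k:ℝ)+2) * (W k / (2*((k:ℝ)+1)^(2*s+1))) :=
        mul_nonneg (by positivity) (div_nonneg (hW k) (by positivity))
      exact mul_le_mul_of_nonneg_right hr1 he
    have h3 : ∑ k ∈ Finset.range m, W k / (2*((k:ℝ)+1))
        ≤ (m:ℝ)^(2*s-1) * ∑ k ∈ Finset.range m, ((k:ℝ)+2) * (W k / (2*((k:ℝ)+1)^(2*s+1))) := by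
      rw [Finset.mul_sum]
      exact Finset.sum_le_sum hstep
    have h4 : ∑ k ∈ Finset.range m, ((k:ℝ)+2) * (W k / (2*((k:ℝ)+1)^(2*s+1))) ≤ T :=
      Summable.sum_le_tsum _ (fun k _ => mul_nonneg (by positivity) (div_nonneg (hW k) (by positivity))) hsum
    have h5 : (m:ℝ)^(2*s-1) ≤ 2*π*τ/R^2 := by
      have hm : (m:ℝ) ≤ Xr := Nat.floor_le hXrpos.le
      have h6 : (m:ℝ)^(2*s-1) ≤ Xr^(2*s-1) :=
        Real.rpow_le_rpow (Nat.cast_nonneg m) hm (by linarith)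
      refine h6.trans_eq ?_
      rw [hXrdef, ← Real.rpow_mul (by positivity), one_div,
        inv_mul_cancel₀ (by linarith : 2*s-1 ≠ 0), Real.rpow_one]
    have hmnn : (0:ℝ) ≤ (m:ℝ)^(2*s-1) := Real.rpow_nonneg (Nat.cast_nonneg m) _
    calc ∑ k ∈ Finset.range m, W k / (2*((k:ℝ)+1))
        ≤ (m:ℝ)^(2*s-1) * T := h3.trans (mul_le_mul_of_nonneg_left h4 hmnn)
      _ ≤ (2*π*τ/R^2) * (R^2/(4*π)) := by
          apply mul_le_mul h5 hTle hTnn (by positivity)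
      _ = τ/2 := by field_simp; ring
  -- combine
  rcases le_or_gt m N with hmn | hmn
  · have hsplit : ∑ k ∈ Finset.range N, W k / (2*((k:ℝ)+1))
        = ∑ k ∈ Finset.range m, W k / (2*((k:ℝ)+1)) + ∑ k ∈ Finset.Ico m N, W k / (2*((k:ℝ)+1)) := by
      rw [Finset.range_eq_Ico, Finset.range_eq_Ico]
      exact (Finset.sum_Ico_consecutive _ (Nat.zero_le m) hmn).symm
    linarith
  · exfalso
    have hsub : ∑ k ∈ Finset.range N, W k / (2*((k:ℝ)+1))
        ≤ ∑ k ∈ Finset.range m, W k / (2*((k:ℝ)+1)) := by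
      apply Finset.sum_le_sum_of_subset_of_nonneg
      · exact Finset.range_subset_range.2 hmn.le
      · intro k _ _; exact div_nonneg (hW k) (by positivity)
    linarith

lemma harmonic_real (N : ℕ) : ∑ k ∈ Finset.range N, ((k:ℝ)+1)⁻¹ ≤ 1 + Real.log N := by
  have h1 : (harmonic N : ℝ) = ∑ k ∈ Finset.range N, ((k:ℝ)+1)⁻¹ := by
    rw [harmonic]
    push_cast
    rfl
  rw [← h1]
  exact harmonic_le_one_add_log N

lemma chernoff_lemma {Ω : Type*} [MeasurableSpace Ω] (P : Measure Ω) [IsProbabilityMeasure P]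
    (F' : (ℕ ⊕ ℕ) → Ω → ℝ) (hmeas : ∀ i, Measurable (F' i))
    (hindep : iIndepFun F' P)
    (hmap : ∀ i, Measure.map (F' i) P = gaussianReal 0 1)
    (m N : ℕ) (lam : ℝ) :
    (P {ω | lam ≤ ∑ k ∈ Finset.Ico m N,
        (((F' (Sum.inl k) ω)^2 + (F' (Sum.inr k) ω)^2) / (2*((k:ℝ)+1)))}).toReal
      ≤ Real.exp (-(((m:ℝ)+1)/2) * lam) * Real.exp (2 * (((m:ℝ)+1)/2) * (1 + Real.log N)) := by
  classical
  set t₀ : ℝ := ((m:ℝ)+1)/2 with ht₀def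
  have ht₀pos : 0 < t₀ := by positivity
  set w : ℕ ⊕ ℕ → ℝ := Sum.elim (fun k => (2*((k:ℝ)+1))⁻¹) (fun k => (2*((k:ℝ)+1))⁻¹) with hwdef
  set X : (ℕ ⊕ ℕ) → Ω → ℝ := fun i ω => w i * (F' i ω)^2 with hXdef
  set S : Finset (ℕ ⊕ ℕ) := Finset.disjSum (Finset.Ico m N) (Finset.Ico m N) with hSdef
  have hwnn : ∀ i, 0 ≤ w i := by
    intro i; rcases i with k | k <;> simp [hwdef] <;> positivity
  have hwc : ∀ i ∈ S, t₀ * w i ≤ 1/4 := by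
    intro i hi
    have key : ∀ k : ℕ, m ≤ k → t₀ * (2*((k:ℝ)+1))⁻¹ ≤ 1/4 := by
      intro k hk
      have hk1 : (0:ℝ) < (k:ℝ)+1 := by positivity
      have hmk : ((m:ℝ)+1) ≤ ((k:ℝ)+1) := by
        have : (m:ℝ) ≤ (k:ℝ) := by exact_mod_cast hk
        linarith
      rw [← div_eq_mul_inv, div_le_div_iff₀ (by positivity) (by norm_num)]
      have : t₀ = ((m:ℝ)+1)/2 := ht₀def
      linarith
    rcases i with k | k
    · have hk : k ∈ Finset.Ico m N := by
        simpa [hSdef, Finset.mem_disjSum] using hi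
      exact key k (Finset.mem_Ico.1 hk).1
    · have hk : k ∈ Finset.Ico m N := by
        simpa [hSdef, Finset.mem_disjSum] using hi
      exact key k (Finset.mem_Ico.1 hk).1
  have hXmeas : ∀ i, Measurable (X i) := fun i => ((hmeas i).pow_const 2).const_mul _
  have hindepX : iIndepFun X P := by
    have := hindep.comp (fun i (x : ℝ) => w i * x^2)
      (fun i => (measurable_id.pow_const 2).const_mul _)
    exact this
  -- per-index integrability and mgf bound
  have hint : ∀ i ∈ S, Integrable (fun ω => Real.exp (t₀ * X i ω)) P := by
    intro i hi
    have hc0 : 0 ≤ t₀ * w i := mul_nonneg ht₀pos.le (hwnn i)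
    have hgi := (gauss_exp_sq (t₀ * w i) hc0 (hwc i hi)).1
    have heq : (fun ω => Real.exp (t₀ * X i ω)) = (fun x => Real.exp ((t₀ * w i) * x^2)) ∘ F' i := by
      funext ω; simp only [hXdef, Function.comp]; ring_nf
    rw [heq]
    have hm2 : Measurable (fun x : ℝ => Real.exp ((t₀ * w i) * x^2)) :=
      ((measurable_id.pow_const 2).const_mul _).exp
    rw [← integrable_map_measure hm2.aestronglyMeasurable (hmeas i).aemeasurable]
    rw [hmap i]; exact hgi
  have hmgf : ∀ i ∈ S, mgf (X i) P t₀ ≤ Real.exp (2 * (t₀ * w i)) := by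
    intro i hi
    have hc0 : 0 ≤ t₀ * w i := mul_nonneg ht₀pos.le (hwnn i)
    have hgi := (gauss_exp_sq (t₀ * w i) hc0 (hwc i hi)).2
    have heq : mgf (X i) P t₀ = ∫ x, Real.exp ((t₀ * w i) * x^2) ∂(gaussianReal 0 1) := by
      have hm2 : Measurable (fun x : ℝ => Real.exp ((t₀ * w i) * x^2)) :=
        ((measurable_id.pow_const 2).const_mul _).exp
      rw [mgf, ← hmap i, integral_map (hmeas i).aemeasurable hm2.aestronglyMeasurable]
      congr 1; funext ω; simp only [hXdef]; ring_nf
    rw [heq]; exact hgi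
  -- Chernoff
  have hsum_int : Integrable (fun ω => Real.exp (t₀ * (∑ i ∈ S, X i) ω)) P :=
    hindepX.integrable_exp_mul_sum hXmeas hint
  have hchern := measure_ge_le_exp_mul_mgf (X := ∑ i ∈ S, X i) (μ := P) lam ht₀pos.le hsum_int
  have hset : {ω | lam ≤ ∑ k ∈ Finset.Ico m N,
        (((F' (Sum.inl k) ω)^2 + (F' (Sum.inr k) ω)^2) / (2*((k:ℝ)+1)))}
      = {ω | lam ≤ (∑ i ∈ S, X i) ω} := by
    ext ω
    simp only [Set.mem_setOf_eq, Finset.sum_apply, hSdef, Finset.sum_disjSum]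
    have : ∀ k ∈ Finset.Ico m N, ((F' (Sum.inl k) ω)^2 + (F' (Sum.inr k) ω)^2) / (2*((k:ℝ)+1))
        = X (Sum.inl k) ω + X (Sum.inr k) ω := by
      intro k _
      simp only [hXdef, hwdef, Sum.elim_inl, Sum.elim_inr]
      rw [add_div, div_eq_inv_mul, div_eq_inv_mul]
    rw [Finset.sum_congr rfl this, Finset.sum_add_distrib]
  have hmgfsum : mgf (∑ i ∈ S, X i) P t₀ ≤ Real.exp (2 * t₀ * (1 + Real.log N)) := by
    rw [hindepX.mgf_sum hXmeas S]
    calc ∏ i ∈ S, mgf (X i) P t₀ ≤ ∏ i ∈ S, Real.exp (2 * (t₀ * w i)) :=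
          Finset.prod_le_prod (fun i _ => mgf_nonneg) hmgf
      _ = Real.exp (∑ i ∈ S, 2 * (t₀ * w i)) := by rw [Real.exp_sum]
      _ ≤ Real.exp (2 * t₀ * (1 + Real.log N)) := by
          apply Real.exp_le_exp.2
          have hw_sum : ∑ i ∈ S, w i = ∑ k ∈ Finset.Ico m N, ((k:ℝ)+1)⁻¹ := by
            rw [hSdef, Finset.sum_disjSum]
            simp only [hwdef, Sum.elim_inl, Sum.elim_inr]
            rw [← Finset.sum_add_distrib]
            apply Finset.sum_congr rfl
            intro k _
            have hk1 : (0:ℝ) < (k:ℝ)+1 := by positivity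
            rw [← two_mul, mul_inv, ← mul_assoc]
            norm_num
          have hharm : ∑ k ∈ Finset.Ico m N, ((k:ℝ)+1)⁻¹ ≤ 1 + Real.log N := by
            refine le_trans ?_ (harmonic_real N)
            apply Finset.sum_le_sum_of_subset_of_nonneg
            · intro k hk
              rw [Finset.mem_range]
              exact (Finset.mem_Ico.1 hk).2
            · intro k _ _; positivity
          have : ∑ i ∈ S, 2 * (t₀ * w i) = 2 * t₀ * ∑ i ∈ S, w i := by
            rw [Finset.mul_sum]; apply Finset.sum_congr rfl; intro i _; ring
          rw [this, hw_sum]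
          have h2t : 0 ≤ 2 * t₀ := by positivity
          exact mul_le_mul_of_nonneg_left hharm h2t
  rw [hset]
  calc (P {ω | lam ≤ (∑ i ∈ S, X i) ω}).toReal
      ≤ Real.exp (-t₀ * lam) * mgf (∑ i ∈ S, X i) P t₀ := hchern
    _ ≤ Real.exp (-t₀ * lam) * Real.exp (2 * t₀ * (1 + Real.log N)) := by
        apply mul_le_mul_of_nonneg_left hmgfsum (Real.exp_nonneg _)
    _ = Real.exp (-(((m:ℝ)+1)/2) * lam) * Real.exp (2 * (((m:ℝ)+1)/2) * (1 + Real.log N)) := by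
        rw [ht₀def]

set_option maxHeartbeats 1000000 in
/-- Tail bound for `‖P_N u‖_{H^s}` on the energy ball `{𝓔(u) ≤ R}`, for
`t ≥ K (ln N)^{2/κ}`, with `a = 4κs/(2s−1)` and `b = 2/(2s−1)`. -/
theorem statement17 (s : ℝ) (hs : 1 < s) (κ : ℝ) (hκ : 0 < κ) (R : ℝ) (hR : 0 < R)
    {Ω : Type*} [MeasurableSpace Ω] (P : Measure Ω) [IsProbabilityMeasure P]
    (h l : ℕ → Ω → ℝ)
    (hindep : iIndepFun (Sum.elim h l) P)
    (hgauss : ∀ i : ℕ ⊕ ℕ, Measure.map (Sum.elim h l i) P = gaussianReal 0 1) :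
    ∃ C > 0, ∃ c > 0, ∃ K > 0, ∀ N : ℕ, 2 ≤ N → ∀ t : ℝ,
      K * Real.log N ^ (2 / κ) ≤ t →
      (P ({ω | t ^ κ ≤ HsN s s h l N ω} ∩ {ω | energ s h l ω ≤ R})).toReal
        ≤ C * Real.exp (-(c * t ^ (4 * κ * s / (2 * s - 1)) / R ^ (2 / (2 * s - 1)))) := by
  classical
  have hπ := Real.pi_pos
  -- measurable modifications
  have hF_ae : ∀ i : ℕ ⊕ ℕ, AEMeasurable (Sum.elim h l i) P := by
    intro i
    by_contra hc
    have h0 := Measure.map_of_not_aemeasurable hc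
    have h1 := hgauss i
    rw [h0] at h1
    have h2 : (gaussianReal 0 1) Set.univ = 1 := measure_univ
    rw [← h1] at h2
    simp at h2
  set F' : (ℕ ⊕ ℕ) → Ω → ℝ := fun i => (hF_ae i).mk _ with hF'def
  have hFme : ∀ i, Measurable (F' i) := fun i => (hF_ae i).measurable_mk
  have hFeq : ∀ i, Sum.elim h l i =ᵐ[P] F' i := fun i => (hF_ae i).ae_eq_mk
  have hmap' : ∀ i, Measure.map (F' i) P = gaussianReal 0 1 := by
    intro i
    rw [← Measure.map_congr (hFeq i)]
    exact hgauss i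
  have hindep' : iIndepFun F' P := iIndepFun_congr hFeq hindep
  -- the squared variables and energy terms
  set W : ℕ → Ω → ℝ := fun k ω => (F' (Sum.inl k) ω)^2 + (F' (Sum.inr k) ω)^2 with hWdef
  have hWmeas : ∀ k, Measurable (W k) :=
    fun k => ((hFme (Sum.inl k)).pow_const 2).add ((hFme (Sum.inr k)).pow_const 2)
  have hWnn : ∀ k ω, 0 ≤ W k ω := fun k ω => by positivity
  set term : ℕ → Ω → ℝ := fun k ω => ((k:ℝ)+2) * (W k ω / (2*((k:ℝ)+1)^(2*s+1))) with htermdef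
  have htermnn : ∀ k ω, 0 ≤ term k ω := fun k ω =>
    mul_nonneg (by positivity) (div_nonneg (hWnn k ω) (by positivity))
  have htermmeas : ∀ k, Measurable (term k) :=
    fun k => ((hWmeas k).div_const _).const_mul _
  -- second moment bound
  have hx2 : ∀ i : ℕ ⊕ ℕ, ∫⁻ ω, ENNReal.ofReal ((F' i ω)^2) ∂P ≤ ENNReal.ofReal 8 := by
    intro i
    have hmx : Measurable (fun x : ℝ => ENNReal.ofReal (x^2)) :=
      (measurable_id.pow_const 2).ennreal_ofReal
    have h1 : ∫⁻ ω, ENNReal.ofReal ((F' i ω)^2) ∂P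
        = ∫⁻ x, ENNReal.ofReal (x^2) ∂(gaussianReal 0 1) := by
      rw [← hmap' i, lintegral_map hmx (hFme i)]
    rw [h1]
    have hint4 := (gauss_exp_sq (1/4) (by norm_num) (by norm_num)).1
    have hval4 := (gauss_exp_sq (1/4) (by norm_num) (by norm_num)).2
    calc ∫⁻ x, ENNReal.ofReal (x^2) ∂(gaussianReal 0 1)
        ≤ ∫⁻ x, ENNReal.ofReal (4 * Real.exp ((1/4) * x^2)) ∂(gaussianReal 0 1) := by
          apply lintegral_mono
          intro x
          apply ENNReal.ofReal_le_ofReal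
          have hu := Real.add_one_le_exp ((1/4) * x^2)
          nlinarith [sq_nonneg x]
      _ = ENNReal.ofReal (∫ x, 4 * Real.exp ((1/4) * x^2) ∂(gaussianReal 0 1)) := by
          rw [ofReal_integral_eq_lintegral_ofReal (hint4.const_mul 4)
            (Filter.Eventually.of_forall fun x => by positivity)]
      _ ≤ ENNReal.ofReal 8 := by
          apply ENNReal.ofReal_le_ofReal
          rw [integral_const_mul]
          have he2 : Real.exp (2 * (1/4 : ℝ)) ≤ 2 := by
            rw [show (2:ℝ) * (1/4) = 1/2 by norm_num]
            nlinarith [Real.exp_one_lt_d9, Real.exp_pos (1/2 : ℝ),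
              Real.exp_add (1/2 : ℝ) (1/2), Real.exp_pos (1:ℝ)]
          nlinarith [hval4, Real.exp_pos (2 * (1/4:ℝ))]
  -- a.e. summability of the energy series
  set q : ℕ → ℝ := fun k => ((k:ℝ)+2) / (2*((k:ℝ)+1)^(2*s+1)) with hqdef
  have hqnn : ∀ k, 0 ≤ q k := fun k => div_nonneg (by positivity) (by positivity)
  have hqsum : Summable q := by
    have hmaj : Summable (fun k : ℕ => ((k:ℝ)+1)^(-2 : ℝ)) := by
      have h1 : Summable (fun n : ℕ => ((n:ℝ))^(-2 : ℝ)) :=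
        Real.summable_nat_rpow.2 (by norm_num)
      have h2 := (summable_nat_add_iff 1).2 h1
      exact h2.congr fun k => by norm_cast
    apply Summable.of_nonneg_of_le hqnn ?_ hmaj
    intro k
    have hk0 : (0:ℝ) ≤ (k:ℝ) := Nat.cast_nonneg k
    have hk1 : (1:ℝ) ≤ (k:ℝ)+1 := by linarith
    have hD : (0:ℝ) < ((k:ℝ)+1)^(2*s+1) := Real.rpow_pos_of_pos (by linarith) _
    have h1 : q k ≤ ((k:ℝ)+1)^(-(2*s) : ℝ) := by
      have h2 : ((k:ℝ)+1)^(-(2*s) : ℝ) = ((k:ℝ)+1) / ((k:ℝ)+1)^(2*s+1) := by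
        rw [eq_div_iff hD.ne', ← Real.rpow_add (by linarith : (0:ℝ) < (k:ℝ)+1),
          show -(2*s) + (2*s+1) = 1 by ring, Real.rpow_one]
      rw [hqdef, h2, div_le_div_iff₀ (by positivity) hD]
      nlinarith [hD]
    refine h1.trans ?_
    exact Real.rpow_le_rpow_of_exponent_le hk1 (by linarith)
  -- a.e. finiteness of the lifted energy series
  have hA_meas : Measurable (fun ω => ∑' k : ℕ, ENNReal.ofReal (term k ω)) :=
    Measurable.ennreal_tsum (fun k => (htermmeas k).ennreal_ofReal)
  have hA_fin : ∀ᵐ ω ∂P, (∑' k : ℕ, ENNReal.ofReal (term k ω)) ≠ ⊤ := by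
    have hbound : ∫⁻ ω, (∑' k : ℕ, ENNReal.ofReal (term k ω)) ∂P
        ≤ ENNReal.ofReal (∑' k : ℕ, q k) * ENNReal.ofReal 16 := by
      rw [lintegral_tsum (fun k => ((htermmeas k).ennreal_ofReal).aemeasurable)]
      have hterm_l : ∀ k : ℕ, ∫⁻ ω, ENNReal.ofReal (term k ω) ∂P
          ≤ ENNReal.ofReal (q k) * ENNReal.ofReal 16 := by
        intro k
        have h1 : ∀ ω, term k ω = q k * W k ω := by
          intro ω; rw [htermdef, hqdef]; ring
        have h2 : ∀ ω, ENNReal.ofReal (term k ω)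
            = ENNReal.ofReal (q k) * ENNReal.ofReal (W k ω) := by
          intro ω; rw [h1 ω, ENNReal.ofReal_mul (hqnn k)]
        simp_rw [h2]
        rw [lintegral_const_mul _ ((hWmeas k).ennreal_ofReal)]
        apply mul_le_mul_right ?_ _
        have h3 : ∀ ω, ENNReal.ofReal (W k ω)
            = ENNReal.ofReal ((F' (Sum.inl k) ω)^2) + ENNReal.ofReal ((F' (Sum.inr k) ω)^2) := by
          intro ω; rw [hWdef, ENNReal.ofReal_add (by positivity) (by positivity)]
        simp_rw [h3]
        rw [lintegral_add_left ((hFme (Sum.inl k)).pow_const 2).ennreal_ofReal]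
        calc ∫⁻ ω, ENNReal.ofReal ((F' (Sum.inl k) ω)^2) ∂P
              + ∫⁻ ω, ENNReal.ofReal ((F' (Sum.inr k) ω)^2) ∂P
            ≤ ENNReal.ofReal 8 + ENNReal.ofReal 8 :=
              add_le_add (hx2 (Sum.inl k)) (hx2 (Sum.inr k))
          _ = ENNReal.ofReal 16 := by rw [← ENNReal.ofReal_add] <;> norm_num
      calc ∑' k : ℕ, ∫⁻ ω, ENNReal.ofReal (term k ω) ∂P
          ≤ ∑' k : ℕ, ENNReal.ofReal (q k) * ENNReal.ofReal 16 := ENNReal.tsum_le_tsum hterm_l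
        _ = (∑' k : ℕ, ENNReal.ofReal (q k)) * ENNReal.ofReal 16 := ENNReal.tsum_mul_right
        _ = ENNReal.ofReal (∑' k : ℕ, q k) * ENNReal.ofReal 16 := by
            rw [ENNReal.ofReal_tsum_of_nonneg hqnn hqsum]
    have hfin : ∫⁻ ω, (∑' k : ℕ, ENNReal.ofReal (term k ω)) ∂P ≠ ⊤ :=
      ne_top_of_le_ne_top (by finiteness) hbound
    filter_upwards [ae_lt_top hA_meas hfin] with ω hω
    exact hω.ne
  -- choose constants
  refine ⟨1, one_pos, 1/8, by norm_num, Real.exp (100/κ), Real.exp_pos _, ?_⟩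
  intro N hN t ht
  have hN1 : (1:ℝ) < (N:ℝ) := by exact_mod_cast (by omega : 1 < N)
  set L := Real.log N with hLdef
  have hL0 : 0 < L := Real.log_pos hN1
  have hL2 : Real.log 2 ≤ L := Real.log_le_log (by norm_num) (by exact_mod_cast hN)
  have hlog2 : (0.6931:ℝ) ≤ Real.log 2 := by linarith [Real.log_two_gt_d9]
  have hLlb : (0.6931:ℝ) ≤ L := le_trans hlog2 hL2
  have ht0 : 0 < t := lt_of_lt_of_le (by positivity) ht
  set τ := t^(2*κ) with hτdef
  have hτpos : 0 < τ := Real.rpow_pos_of_pos ht0 _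
  set m := ⌊(2*π*τ/R^2) ^ ((1:ℝ)/(2*s-1))⌋₊ with hmdef
  set B := {ω : Ω | τ/2 ≤ ∑ k ∈ Finset.Ico m N,
      (((F' (Sum.inl k) ω)^2 + (F' (Sum.inr k) ω)^2) / (2*((k:ℝ)+1)))} with hBdef
  -- event inclusion
  have hsub : P ({ω | t ^ κ ≤ HsN s s h l N ω} ∩ {ω | energ s h l ω ≤ R}) ≤ P B := by
    apply measure_mono_ae
    filter_upwards [ae_all_iff.2 hFeq, hA_fin] with ω hcoord hfin
    intro hE
    obtain ⟨hE1, hE2⟩ := hE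
    have hh : ∀ j, h j ω = F' (Sum.inl j) ω := fun j => hcoord (Sum.inl j)
    have hll : ∀ j, l j ω = F' (Sum.inr j) ω := fun j => hcoord (Sum.inr j)
    have hsummable : Summable (fun k => term k ω) := by
      have h1 := ENNReal.summable_toReal hfin
      exact h1.congr (fun k => ENNReal.toReal_ofReal (htermnn k ω))
    have hnorm : ∀ k : ℕ, ‖ucoef s h l ((k:ℤ)+1) ω‖^2 = W k ω / (2*((k:ℝ)+1)^(2*s+1)) := by
      intro k
      rw [ucoef_congr s h l (fun j => F' (Sum.inl j)) (fun j => F' (Sum.inr j)) ω hh hll,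
        ucoef_norm_sq]
    have henerg' : Real.sqrt (4*π* ∑' k : ℕ, ((k:ℝ)+2) * ((W k ω) / (2*((k:ℝ)+1)^(2*s+1)))) ≤ R := by
      have he : energ s h l ω
          = Real.sqrt (4*π* ∑' k : ℕ, ((k:ℝ)+2) * ((W k ω) / (2*((k:ℝ)+1)^(2*s+1)))) := by
        unfold energ
        congr 2
        exact tsum_congr fun k => by rw [hnorm k]
      rw [← he]; exact hE2
    have hHs' : t^κ ≤ Real.sqrt (∑ k ∈ Finset.range N, (W k ω) / (2*((k:ℝ)+1))) := by
      have hh2 : HsN s s h l N ω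
          = Real.sqrt (∑ k ∈ Finset.range N, (W k ω) / (2*((k:ℝ)+1))) := by
        unfold HsN
        congr 1
        rw [← Finset.Ico_add_one_right_eq_Icc, Finset.sum_Ico_eq_sum_range]
        have eN : N + 1 - 1 = N := rfl
        rw [eN]
        apply Finset.sum_congr rfl
        intro k _
        have e1 : ((1+k : ℕ) : ℤ) = (k:ℤ)+1 := by push_cast; ring
        have e2 : ((1+k : ℕ) : ℝ) = (k:ℝ)+1 := by push_cast; ring
        rw [e1, hnorm k, e2, coeff_simp]
      rw [← hh2]; exact hE1
    exact det_lemma s κ t R hs ht0 hκ hR N (fun k => W k ω) (fun k => hWnn k ω)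
      hsummable henerg' hHs'
  -- Chernoff bound
  have hchern := chernoff_lemma P F' hFme hindep' hmap' m N (τ/2)
  -- numeric bounds
  set t₀ : ℝ := ((m:ℝ)+1)/2 with ht₀def
  have ht₀pos : (0:ℝ) < t₀ := by positivity
  have hτ20 : 20 * L ≤ τ := by
    have h1 : (Real.exp (100/κ) * L^((2:ℝ)/κ))^(2*κ) ≤ t^(2*κ) :=
      Real.rpow_le_rpow (by positivity) ht (by positivity)
    have h2 : (Real.exp (100/κ) * L^((2:ℝ)/κ))^(2*κ) = Real.exp 200 * L^(4:ℝ) := by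
      rw [Real.mul_rpow (Real.exp_nonneg _) (Real.rpow_nonneg hL0.le _)]
      congr 1
      · rw [Real.rpow_def_of_pos (Real.exp_pos _), Real.log_exp]
        congr 1
        field_simp
        ring
      · rw [← Real.rpow_mul hL0.le]
        congr 1
        field_simp
        ring
    have h3 : (201:ℝ) * L^(4:ℝ) ≤ Real.exp 200 * L^(4:ℝ) := by
      have := Real.add_one_le_exp (200:ℝ)
      nlinarith [Real.rpow_nonneg hL0.le (4:ℝ)]
    have h4 : 20 * L ≤ (201:ℝ) * L^(4:ℝ) := by
      have hL4 : L^(4:ℝ) = L^(4:ℕ) := by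
        rw [← Real.rpow_natCast L 4]
        norm_num
      rw [hL4]
      nlinarith [pow_le_pow_left₀ (by norm_num : (0:ℝ) ≤ 0.6931) hLlb 3,
        mul_le_mul_of_nonneg_right (pow_le_pow_left₀ (by norm_num : (0:ℝ) ≤ 0.6931) hLlb 3)
          (le_trans (by norm_num) hLlb)]
    have h5 : (Real.exp (100/κ) * L^((2:ℝ)/κ))^(2*κ) ≤ τ := h1
    linarith [h5, h3, h4, h2.le, h2.ge]
  have hτ4 : 2*(1+L) ≤ τ/4 := by linarith
  -- main exponent bound
  set p : ℝ := (1:ℝ)/(2*s-1) with hpdef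
  have hden : (2*s-1) ≠ 0 := by linarith
  have hp0 : 0 < p := by rw [hpdef]; apply div_pos one_pos; linarith
  have hta : t^(4*κ*s/(2*s-1)) = τ^p * τ := by
    have e3 : τ^p * τ = t^((2*κ)*p + 2*κ) := by
      rw [hτdef, ← Real.rpow_mul ht0.le, ← Real.rpow_add ht0]
    rw [e3]
    congr 1
    rw [hpdef]
    rw [div_eq_iff hden, add_mul, mul_assoc (2*κ), one_div_mul_cancel hden]
    ring
  have hRb : R^((2:ℝ)/(2*s-1)) = (R^2)^p := by
    rw [← Real.rpow_natCast R 2, ← Real.rpow_mul hR.le]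
    congr 1
    rw [hpdef]
    push_cast
    field_simp
  have hXrge : τ^p / (R^2)^p ≤ (m:ℝ)+1 := by
    have h6 : (τ/R^2)^p ≤ (2*π*τ/R^2)^p := by
      apply Real.rpow_le_rpow (by positivity) ?_ hp0.le
      rw [div_le_div_iff₀ (by positivity) (by positivity)]
      nlinarith [mul_pos hτpos (pow_pos hR 2), Real.pi_gt_three]
    have h7 : (2*π*τ/R^2)^p ≤ (m:ℝ)+1 := by
      rw [hmdef]
      exact (Nat.lt_floor_add_one _).le
    calc τ^p / (R^2)^p = (τ/R^2)^p := (Real.div_rpow hτpos.le (by positivity) _).symm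
      _ ≤ (m:ℝ)+1 := h6.trans h7
  have hfinle : 1/8 * t^(4*κ*s/(2*s-1)) / R^((2:ℝ)/(2*s-1)) ≤ ((m:ℝ)+1)*τ/8 := by
    rw [hta, hRb]
    have h8 : τ^p * τ / (R^2)^p = (τ^p / (R^2)^p) * τ := by ring
    have h9 : (τ^p / (R^2)^p) * τ ≤ ((m:ℝ)+1)*τ :=
      mul_le_mul_of_nonneg_right hXrge hτpos.le
    calc 1/8 * (τ^p * τ) / (R^2)^p = (τ^p / (R^2)^p) * τ / 8 := by ring
      _ ≤ ((m:ℝ)+1)*τ/8 := by linarith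
  -- conclude
  calc (P ({ω | t ^ κ ≤ HsN s s h l N ω} ∩ {ω | energ s h l ω ≤ R})).toReal
      ≤ (P B).toReal := ENNReal.toReal_mono (measure_ne_top P B) hsub
    _ ≤ Real.exp (-(((m:ℝ)+1)/2) * (τ/2)) * Real.exp (2 * (((m:ℝ)+1)/2) * (1 + L)) := hchern
    _ = Real.exp (-t₀ * (τ/2) + 2 * t₀ * (1 + L)) := by rw [← Real.exp_add, ht₀def]
    _ ≤ Real.exp (-(1/8 * t ^ (4 * κ * s / (2 * s - 1)) / R ^ ((2:ℝ) / (2 * s - 1)))) := by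
        apply Real.exp_le_exp.2
        have h10 : 2 * t₀ * (1+L) ≤ t₀ * (τ/4) := by
          have := mul_le_mul_of_nonneg_left hτ4 ht₀pos.le
          nlinarith
        have h11 : 1/8 * t ^ (4 * κ * s / (2 * s - 1)) / R ^ ((2:ℝ) / (2 * s - 1))
            ≤ t₀ * (τ/4) := by
          rw [ht₀def]
          calc 1/8 * t ^ (4 * κ * s / (2 * s - 1)) / R ^ ((2:ℝ) / (2 * s - 1))
              ≤ ((m:ℝ)+1)*τ/8 := hfinle
            _ = (((m:ℝ)+1)/2) * (τ/4) := by ring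
        linarith
    _ = 1 * Real.exp (-(1/8 * t ^ (4 * κ * s / (2 * s - 1)) / R ^ (2 / (2 * s - 1)))) := by
        rw [one_mul]
end
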